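/- arXiv:math/0505219 — 5 statements merged into one kernel-verified Lean document; each statement's English description precedes it below -/
import Mathlib

section
/- Let k be a commutative ring and H a Hopf algebra over k. Then the k-submodule N = span_k{ x ▷ y − ε(x)·y : x, y ∈ H } of H coincides with the k-submodule span_k{ x·y − y·S²(x) : x, y ∈ H }. -/
open scoped TensorProduct
open TensorProduct

variable (k : Type*) [CommRing k] (H : Type*) [Ring H] [HopfAlgebra k H]

/-- The antipode `S`. -/
noncomputable def aS : H →ₗ[k] H := HopfAlgebra.antipode (R := k)

/-- Multiplication of `H` as a linear map on the tensor square. -/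
noncomputable def mulH : H ⊗[k] H →ₗ[k] H := LinearMap.mul' k H

/-- The left adjoint action as a linear map `H ⊗ H → H`, `x ⊗ y ↦ Σ x₍₁₎ * y * S (x₍₂₎)`. -/
noncomputable def adT : H ⊗[k] H →ₗ[k] H :=
  mulH k H ∘ₗ
  LinearMap.lTensor H
    (mulH k H ∘ₗ (TensorProduct.comm k H H).toLinearMap ∘ₗ LinearMap.rTensor H (aS k H)) ∘ₗ
  (TensorProduct.assoc k H H H).toLinearMap ∘ₗ
  LinearMap.rTensor H (Coalgebra.comul (R := k))

/-- The left adjoint action of a fixed element `x`, as a linear map `y ↦ x ▷ y`. -/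
noncomputable def adL (x : H) : H →ₗ[k] H := adT k H ∘ₗ TensorProduct.mk k H H x

/-- The left adjoint action `x ▷ y = Σ x₍₁₎ y S(x₍₂₎)`. -/
noncomputable def ad (x y : H) : H := adL k H x y

open Coalgebra

variable {k H}

local notation "𝒮" => HopfAlgebra.antipode (R := k)

lemma repr_counit_smul_right {a : H} (r : Repr k a (H × H)) :
    ∑ i ∈ r.index, counit (R := k) (r.left i) • r.right i = a := by
  have h := congrArg (TensorProduct.lid k H) (sum_counit_tmul_eq r)
  simp only [map_sum, lid_tmul] at h
  simpa using h

lemma repr_counit_smul_left {a : H} (r : Repr k a (H × H)) :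
    ∑ i ∈ r.index, counit (R := k) (r.right i) • r.left i = a := by
  have h := congrArg (TensorProduct.rid k H) (sum_tmul_counit_eq r)
  simp only [map_sum, rid_tmul] at h
  simpa using h

lemma map_repr_tmul_tmul (φ : H ⊗[k] (H ⊗[k] H) →ₗ[k] H) {a : H} (r : Repr k a (H × H))
    (r1 : ∀ i, Repr k (r.left i) (H × H)) (r2 : ∀ i, Repr k (r.right i) (H × H)) :
    ∑ i ∈ r.index, ∑ j ∈ (r1 i).index,
      φ ((r1 i).left j ⊗ₜ[k] ((r1 i).right j ⊗ₜ[k] r.right i)) =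
    ∑ i ∈ r.index, ∑ j ∈ (r2 i).index,
      φ (r.left i ⊗ₜ[k] ((r2 i).left j ⊗ₜ[k] (r2 i).right j)) := by
  have h := congrArg φ (sum_tmul_tmul_eq r r1 r2)
  simpa [map_sum] using h

noncomputable def mulRepr {u v : H} (ru : Repr k u (H × H)) (rv : Repr k v (H × H)) : Repr k (u * v) ((H × H) × (H × H)) where
  index := ru.index ×ˢ rv.index
  left := fun p => ru.left p.1 * rv.left p.2
  right := fun p => ru.right p.1 * rv.right p.2
  eq := by
    rw [Bialgebra.comul_mul, ← ru.eq, ← rv.eq, Finset.sum_mul_sum]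
    rw [Finset.sum_product]
    simp [Algebra.TensorProduct.tmul_mul_tmul]

/-- the common middle expression equals `S (a * b)` -/
lemma sum_collapse_left (a b : H) (rb : Repr k b (H × H)) (rb2 : ∀ j, Repr k (rb.right j) (H × H)) :
    ∑ j ∈ rb.index, ∑ m ∈ (rb2 j).index,
      𝒮 (rb.left j) * ((rb2 j).left m * 𝒮 (a * (rb2 j).right m)) = 𝒮 (a * b) := by
  let rb1 : ∀ j, Repr k (rb.left j) (H × H) := fun j => ℛ k _
  let φ : H ⊗[k] (H ⊗[k] H) →ₗ[k] H :=
    LinearMap.mul' k H ∘ₗ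
      map (𝒮) (LinearMap.mul' k H ∘ₗ
        LinearMap.lTensor H ((𝒮) ∘ₗ LinearMap.mulLeft k a))
  have hφ : ∀ u v w : H, φ (u ⊗ₜ[k] (v ⊗ₜ[k] w)) = 𝒮 u * (v * 𝒮 (a * w)) := by
    intro u v w
    simp [φ, LinearMap.mul'_apply]
  have key := map_repr_tmul_tmul φ rb rb1 rb2
  simp only [hφ] at key
  rw [← key]
  have inner : ∀ j ∈ rb.index,
      ∑ m ∈ (rb1 j).index,
        𝒮 ((rb1 j).left m) * ((rb1 j).right m * 𝒮 (a * rb.right j)) =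
      counit (R := k) (rb.left j) • 𝒮 (a * rb.right j) := by
    intro j _
    have : ∀ m, 𝒮 ((rb1 j).left m) * ((rb1 j).right m * 𝒮 (a * rb.right j)) =
        (𝒮 ((rb1 j).left m) * (rb1 j).right m) * 𝒮 (a * rb.right j) := by
      intro m; rw [mul_assoc]
    rw [Finset.sum_congr rfl fun m _ => this m, ← Finset.sum_mul,
      HopfAlgebra.sum_antipode_mul_eq_smul (rb1 j), smul_mul_assoc, one_mul]
  rw [Finset.sum_congr rfl inner]
  calc ∑ j ∈ rb.index, counit (R := k) (rb.left j) • 𝒮 (a * rb.right j)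
      = 𝒮 (∑ j ∈ rb.index, counit (R := k) (rb.left j) • (a * rb.right j)) := by
        rw [map_sum]; exact Finset.sum_congr rfl fun j _ => (map_smul _ _ _).symm
    _ = 𝒮 (a * b) := by
        congr 1
        calc ∑ j ∈ rb.index, counit (R := k) (rb.left j) • (a * rb.right j)
            = a * ∑ j ∈ rb.index, counit (R := k) (rb.left j) • rb.right j := by
              rw [Finset.mul_sum]
              exact Finset.sum_congr rfl fun j _ => (mul_smul_comm _ _ _).symm
          _ = a * b := by rw [repr_counit_smul_right rb]

lemma antipode_mul (a b : H) : 𝒮 (a * b) = 𝒮 b * 𝒮 a := by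
  let ra := ℛ k a
  let ra1 : ∀ i, Repr k (ra.left i) (H × H) := fun i => ℛ k _
  let ra2 : ∀ i, Repr k (ra.right i) (H × H) := fun i => ℛ k _
  let rb := ℛ k b
  let rb2 : ∀ j, Repr k (rb.right j) (H × H) := fun j => ℛ k _
  rw [← sum_collapse_left a b rb rb2]
  -- step 5 : collapse of the `a`-coassociativity, for fixed j, m
  have step5 : ∀ j, ∀ m,
      ∑ i ∈ ra.index, ∑ l ∈ (ra2 i).index,
        (𝒮 (rb.left j) * 𝒮 (ra.left i)) *
          (((ra2 i).left l * (rb2 j).left m) * 𝒮 ((ra2 i).right l * (rb2 j).right m)) =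
      𝒮 (rb.left j) * ((rb2 j).left m * 𝒮 (a * (rb2 j).right m)) := by
    intro j m
    set p := 𝒮 (rb.left j) with hp
    set q := (rb2 j).left m with hq
    set r := (rb2 j).right m with hr
    let φ : H ⊗[k] (H ⊗[k] H) →ₗ[k] H :=
      LinearMap.mul' k H ∘ₗ
        map (LinearMap.mulLeft k p ∘ₗ (𝒮)) (LinearMap.mul' k H ∘ₗ
          LinearMap.lTensor H (LinearMap.mulLeft k q ∘ₗ (𝒮) ∘ₗ LinearMap.mulRight k r))
    have hφ : ∀ u v w : H, φ (u ⊗ₜ[k] (v ⊗ₜ[k] w)) = (p * 𝒮 u) * (v * (q * 𝒮 (w * r))) := by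
      intro u v w; simp [φ, LinearMap.mul'_apply]
    have key := map_repr_tmul_tmul φ ra ra1 ra2
    simp only [hφ] at key
    have rhs_eq : ∑ i ∈ ra.index, ∑ l ∈ (ra2 i).index,
        (p * 𝒮 (ra.left i)) * (((ra2 i).left l * q) * 𝒮 ((ra2 i).right l * r)) =
        ∑ i ∈ ra.index, ∑ l ∈ (ra2 i).index,
        (p * 𝒮 (ra.left i)) * ((ra2 i).left l * (q * 𝒮 ((ra2 i).right l * r))) := by
      exact Finset.sum_congr rfl fun i _ => Finset.sum_congr rfl fun l _ => by
        rw [mul_assoc ((ra2 i).left l)]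
    rw [rhs_eq, ← key]
    -- collapse the ra1 side
    have inner : ∀ i ∈ ra.index,
        ∑ l ∈ (ra1 i).index,
          (p * 𝒮 ((ra1 i).left l)) * ((ra1 i).right l * (q * 𝒮 (ra.right i * r))) =
        counit (R := k) (ra.left i) • (p * (q * 𝒮 (ra.right i * r))) := by
      intro i _
      have : ∀ l, (p * 𝒮 ((ra1 i).left l)) * ((ra1 i).right l * (q * 𝒮 (ra.right i * r))) =
          p * ((𝒮 ((ra1 i).left l) * (ra1 i).right l) * (q * 𝒮 (ra.right i * r))) := by
        intro l; rw [mul_assoc p, ← mul_assoc (𝒮 ((ra1 i).left l))]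
      rw [Finset.sum_congr rfl fun l _ => this l, ← Finset.mul_sum, ← Finset.sum_mul,
        HopfAlgebra.sum_antipode_mul_eq_smul (ra1 i), smul_mul_assoc, one_mul, mul_smul_comm]
    rw [Finset.sum_congr rfl inner]
    calc ∑ i ∈ ra.index, counit (R := k) (ra.left i) • (p * (q * 𝒮 (ra.right i * r)))
        = p * (q * 𝒮 ((∑ i ∈ ra.index, counit (R := k) (ra.left i) • ra.right i) * r)) := by
          rw [Finset.sum_mul, map_sum, Finset.mul_sum, Finset.mul_sum]
          exact Finset.sum_congr rfl fun i _ => by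
            rw [smul_mul_assoc, map_smul, mul_smul_comm, mul_smul_comm]
      _ = p * (q * 𝒮 (a * r)) := by rw [repr_counit_smul_right ra]
  refine Eq.symm ?_
  have hb : 𝒮 b = ∑ j ∈ rb.index, counit (R := k) (rb.right j) • 𝒮 (rb.left j) := by
    conv_lhs => rw [← repr_counit_smul_left rb]
    rw [map_sum]; exact Finset.sum_congr rfl fun j _ => map_smul _ _ _
  have ha : 𝒮 a = ∑ i ∈ ra.index, counit (R := k) (ra.right i) • 𝒮 (ra.left i) := by
    conv_lhs => rw [← repr_counit_smul_left ra]
    rw [map_sum]; exact Finset.sum_congr rfl fun i _ => map_smul _ _ _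
  rw [hb, ha, Finset.sum_mul]
  have perj : ∀ j ∈ rb.index,
      (counit (R := k) (rb.right j) • 𝒮 (rb.left j)) *
        (∑ i ∈ ra.index, counit (R := k) (ra.right i) • 𝒮 (ra.left i)) =
      ∑ m ∈ (rb2 j).index, 𝒮 (rb.left j) * ((rb2 j).left m * 𝒮 (a * (rb2 j).right m)) := by
    intro j _
    rw [Finset.mul_sum]
    have peri : ∀ i ∈ ra.index,
        (counit (R := k) (rb.right j) • 𝒮 (rb.left j)) *
          (counit (R := k) (ra.right i) • 𝒮 (ra.left i)) =
        ∑ m ∈ (rb2 j).index, ∑ l ∈ (ra2 i).index,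
          (𝒮 (rb.left j) * 𝒮 (ra.left i)) *
            (((ra2 i).left l * (rb2 j).left m) * 𝒮 ((ra2 i).right l * (rb2 j).right m)) := by
      intro i _
      have hsm := HopfAlgebra.sum_mul_antipode_eq_smul (mulRepr (ra2 i) (rb2 j))
      calc (counit (R := k) (rb.right j) • 𝒮 (rb.left j)) *
            (counit (R := k) (ra.right i) • 𝒮 (ra.left i))
          = (counit (R := k) (ra.right i * rb.right j)) •
              (𝒮 (rb.left j) * 𝒮 (ra.left i)) := by
            rw [smul_mul_assoc, mul_smul_comm, smul_smul, Bialgebra.counit_mul, mul_comm]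
        _ = (𝒮 (rb.left j) * 𝒮 (ra.left i)) *
              ((counit (R := k) (ra.right i * rb.right j)) • (1 : H)) := by
            rw [mul_smul_comm, mul_one]
        _ = (𝒮 (rb.left j) * 𝒮 (ra.left i)) *
              ∑ pm ∈ (ra2 i).index ×ˢ (rb2 j).index,
                ((ra2 i).left pm.1 * (rb2 j).left pm.2) *
                  𝒮 ((ra2 i).right pm.1 * (rb2 j).right pm.2) := by
            rw [← hsm]; rfl
        _ = ∑ l ∈ (ra2 i).index, ∑ m ∈ (rb2 j).index,
              (𝒮 (rb.left j) * 𝒮 (ra.left i)) *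
                (((ra2 i).left l * (rb2 j).left m) * 𝒮 ((ra2 i).right l * (rb2 j).right m)) := by
            rw [Finset.mul_sum, Finset.sum_product]
        _ = ∑ m ∈ (rb2 j).index, ∑ l ∈ (ra2 i).index,
              (𝒮 (rb.left j) * 𝒮 (ra.left i)) *
                (((ra2 i).left l * (rb2 j).left m) * 𝒮 ((ra2 i).right l * (rb2 j).right m)) :=
            Finset.sum_comm
    rw [Finset.sum_congr rfl peri, Finset.sum_comm]
    exact Finset.sum_congr rfl fun m _ => step5 j m
  exact Finset.sum_congr rfl perj


lemma antipode_one : 𝒮 (1 : H) = 1 := by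
  have := HopfAlgebra.mul_antipode_rTensor_comul_apply (R := k) (1 : H)
  rw [Bialgebra.comul_one, Algebra.TensorProduct.one_def] at this
  simpa using this

lemma ad_repr {x : H} (y : H) (r : Repr k x (H × H)) :
    ad k H x y = ∑ i ∈ r.index, r.left i * (y * 𝒮 (r.right i)) := by
  simp only [ad, adL, adT, mulH, aS, LinearMap.comp_apply, mk_apply,
    LinearMap.rTensor_tmul, ← r.eq, sum_tmul, map_sum, assoc_tmul,
    LinearMap.lTensor_tmul, comm_tmul, LinearMap.mul'_apply,
    LinearEquiv.coe_coe]

lemma claimB (x y : H) (r : Repr k x (H × H)) :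
    ad k H x y - counit (R := k) x • y =
      ∑ i ∈ r.index,
        (r.left i * (y * 𝒮 (r.right i)) - (y * 𝒮 (r.right i)) * 𝒮 (𝒮 (r.left i))) := by
  rw [Finset.sum_sub_distrib, ← ad_repr y r]
  congr 1
  symm
  calc ∑ i ∈ r.index, (y * 𝒮 (r.right i)) * 𝒮 (𝒮 (r.left i))
      = ∑ i ∈ r.index, y * 𝒮 (𝒮 (r.left i) * r.right i) := by
        refine Finset.sum_congr rfl fun i _ => ?_
        rw [antipode_mul, ← mul_assoc]
    _ = y * 𝒮 (∑ i ∈ r.index, 𝒮 (r.left i) * r.right i) := by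
        rw [map_sum, Finset.mul_sum]
    _ = counit (R := k) x • y := by
        rw [HopfAlgebra.sum_antipode_mul_eq_smul r, map_smul, antipode_one,
          mul_smul_comm, mul_one]

lemma claimA (x y : H) (r : Repr k x (H × H)) (r1 : ∀ i, Repr k (r.left i) (H × H))
    (r2 : ∀ i, Repr k (r.right i) (H × H)) :
    ∑ i ∈ r.index,
      (ad k H (r.left i) (y * 𝒮 (𝒮 (r.right i))) -
        counit (R := k) (r.left i) • (y * 𝒮 (𝒮 (r.right i)))) =
    x * y - y * 𝒮 (𝒮 x) := by
  rw [Finset.sum_sub_distrib]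
  congr 1
  · -- ∑ ad = x * y
    let φ : H ⊗[k] (H ⊗[k] H) →ₗ[k] H :=
      LinearMap.mul' k H ∘ₗ
        LinearMap.lTensor H (LinearMap.mulLeft k y ∘ₗ (𝒮) ∘ₗ LinearMap.mul' k H ∘ₗ
          LinearMap.lTensor H (𝒮))
    have hφ : ∀ u v w : H, φ (u ⊗ₜ[k] (v ⊗ₜ[k] w)) = u * (y * 𝒮 (v * 𝒮 w)) := by
      intro u v w; simp [φ, LinearMap.mul'_apply]
    have key := map_repr_tmul_tmul φ r r1 r2
    simp only [hφ] at key
    calc ∑ i ∈ r.index, ad k H (r.left i) (y * 𝒮 (𝒮 (r.right i)))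
        = ∑ i ∈ r.index, ∑ l ∈ (r1 i).index,
            (r1 i).left l * (y * 𝒮 ((r1 i).right l * 𝒮 (r.right i))) := by
          refine Finset.sum_congr rfl fun i _ => ?_
          rw [ad_repr _ (r1 i)]
          refine Finset.sum_congr rfl fun l _ => ?_
          rw [antipode_mul]; simp only [mul_assoc]
      _ = ∑ i ∈ r.index, ∑ l ∈ (r2 i).index,
            r.left i * (y * 𝒮 ((r2 i).left l * 𝒮 ((r2 i).right l))) := key
      _ = ∑ i ∈ r.index, counit (R := k) (r.right i) • (r.left i * y) := by
          refine Finset.sum_congr rfl fun i _ => ?_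
          rw [← Finset.mul_sum, ← Finset.mul_sum, ← map_sum,
            HopfAlgebra.sum_mul_antipode_eq_smul (r2 i), map_smul, antipode_one,
            mul_smul_comm, mul_one, mul_smul_comm]
      _ = (∑ i ∈ r.index, counit (R := k) (r.right i) • r.left i) * y := by
          rw [Finset.sum_mul]
          exact Finset.sum_congr rfl fun i _ => (smul_mul_assoc _ _ _).symm
      _ = x * y := by rw [repr_counit_smul_left r]
  · calc ∑ i ∈ r.index, counit (R := k) (r.left i) • (y * 𝒮 (𝒮 (r.right i)))
        = y * 𝒮 (𝒮 (∑ i ∈ r.index, counit (R := k) (r.left i) • r.right i)) := by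
          rw [map_sum, map_sum, Finset.mul_sum]
          exact Finset.sum_congr rfl fun i _ => by rw [map_smul, map_smul, mul_smul_comm]
      _ = y * 𝒮 (𝒮 x) := by rw [repr_counit_smul_right r]

variable (k H)

/-- The submodule `N` spanned by `x ▷ y − ε(x)·y` coincides with the span of the
elements `x·y − y·S²(x)`. -/
theorem span_ad_counit_eq_span_mul_antipode_sq :
    Submodule.span k {z : H | ∃ x y : H, z = ad k H x y - Coalgebra.counit (R := k) x • y} =
      Submodule.span k {z : H | ∃ x y : H, z = x * y - y * aS k H (aS k H x)} := by
  apply le_antisymm <;> rw [Submodule.span_le] <;> rintro z ⟨x, y, rfl⟩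
  · let r := ℛ k x
    rw [SetLike.mem_coe, claimB x y r]
    exact Submodule.sum_mem _ fun i _ =>
      Submodule.subset_span ⟨r.left i, y * 𝒮 (r.right i), rfl⟩
  · let r := ℛ k x
    rw [SetLike.mem_coe, show (aS k H : H →ₗ[k] H) = 𝒮 from rfl, ← claimA x y r (fun i => ℛ k _) (fun i => ℛ k _)]
    exact Submodule.sum_mem _ fun i _ =>
      Submodule.subset_span ⟨r.left i, y * 𝒮 (𝒮 (r.right i)), rfl⟩
end

section
/- Suppose f : H → k is a k-linear map which is a homomorphism of left H-modules from H with the adjoint action to k with the trivial action, i.e. f(x ▷ y) = ε(x) f(y) for all x, y ∈ H. Then (id_H ⊗ f) ∘ Δ = (id_H ⊗ f) ∘ Δ̲ = (f ⊗ id_H) ∘ Δ̲ as k-linear maps H → H (identifying H ⊗ k and k ⊗ H with H); elementwise, for every x ∈ H the element Σ x₍₁₎ f(x₍₂₎) equals both Σᵢ Σ x₍₁₎ S(βᵢ) f(αᵢ ▷ x₍₂₎) and Σᵢ Σ f(x₍₁₎ S(βᵢ)) (αᵢ ▷ x₍₂₎). -/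
open scoped TensorProduct
open TensorProduct

variable (k : Type*) [CommRing k] (H : Type*) [Ring H] [HopfAlgebra k H]

variable {ι : Type*} [Fintype ι]

/-- The braiding of `Mod H` on `H ⊗ H`: `ψ(x ⊗ y) = Σᵢ (βᵢ ▷ y) ⊗ (αᵢ ▷ x)`. -/
noncomputable def psiL (α β : ι → H) : H ⊗[k] H →ₗ[k] H ⊗[k] H :=
  ∑ i, (TensorProduct.map (adL k H (β i)) (adL k H (α i))) ∘ₗ
        (TensorProduct.comm k H H).toLinearMap

/-- The transmuted comultiplication `Δ̲(x) = Σᵢ Σ x₍₁₎ S(βᵢ) ⊗ (αᵢ ▷ x₍₂₎)`. -/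
noncomputable def DeltaB (α β : ι → H) : H →ₗ[k] H ⊗[k] H :=
  ∑ i, (TensorProduct.map (LinearMap.mulRight k (aS k H (β i))) (adL k H (α i))) ∘ₗ
        (Coalgebra.comul (R := k))

/-- The transmuted antipode `S̲(x) = Σᵢ βᵢ S(αᵢ ▷ x)`. -/
noncomputable def SB (α β : ι → H) : H →ₗ[k] H :=
  ∑ i, LinearMap.mulLeft k (β i) ∘ₗ aS k H ∘ₗ adL k H (α i)

namespace HopfAux
open Coalgebra
variable {k : Type*} [CommRing k] {H : Type*} [Ring H] [HopfAlgebra k H]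

noncomputable def reprMul {κ₁ κ₂ : Type*} {a b : H} (ρ₁ : Coalgebra.Repr k a κ₁)
    (ρ₂ : Coalgebra.Repr k b κ₂) :
    Coalgebra.Repr k (a * b) (κ₁ × κ₂) where
  index := ρ₁.index ×ˢ ρ₂.index
  left := fun i => ρ₁.left i.1 * ρ₂.left i.2
  right := fun i => ρ₁.right i.1 * ρ₂.right i.2
  eq := by
    rw [Bialgebra.comul_mul, ← ρ₁.eq, ← ρ₂.eq, Finset.sum_mul_sum, Finset.sum_product]
    simp [Algebra.TensorProduct.tmul_mul_tmul]

lemma sum_counit_smul {κ₁ : Type*} {a : H} (ρ : Coalgebra.Repr k a κ₁) :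
    ∑ i ∈ ρ.index, counit (R := k) (ρ.left i) • ρ.right i = a := by
  have := congrArg (TensorProduct.lid k H) (Coalgebra.sum_counit_tmul_eq ρ)
  simp only [map_sum, TensorProduct.lid_tmul] at this
  simpa using this

lemma sum_smul_counit {κ₁ : Type*} {a : H} (ρ : Coalgebra.Repr k a κ₁) :
    ∑ i ∈ ρ.index, counit (R := k) (ρ.right i) • ρ.left i = a := by
  have := congrArg (TensorProduct.rid k H) (Coalgebra.sum_tmul_counit_eq ρ)
  simp only [map_sum, TensorProduct.rid_tmul] at this
  simpa using this

lemma sum_mul_aS {κ₁ : Type*} {a : H} (ρ : Coalgebra.Repr k a κ₁) :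
    ∑ i ∈ ρ.index, ρ.left i * aS k H (ρ.right i) = counit (R := k) a • 1 :=
  HopfAlgebra.sum_mul_antipode_eq_smul ρ

lemma sum_aS_mul {κ₁ : Type*} {a : H} (ρ : Coalgebra.Repr k a κ₁) :
    ∑ i ∈ ρ.index, aS k H (ρ.left i) * ρ.right i = counit (R := k) a • 1 :=
  HopfAlgebra.sum_antipode_mul_eq_smul ρ

lemma aS_one : aS k H (1 : H) = 1 := by
  have := HopfAlgebra.mul_antipode_rTensor_comul_apply (R := k) (a := (1 : H))
  simpa [aS, Algebra.TensorProduct.one_def] using this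

noncomputable def th1 (w₁ w₂ w₃ : H) : H ⊗[k] (H ⊗[k] H) →ₗ[k] H :=
  TensorProduct.lift (LinearMap.mk₂ k
    (fun a t => aS k H (w₁ * a) *
      TensorProduct.lift (LinearMap.mk₂ k
        (fun b c => (w₂ * b) * (aS k H c * aS k H w₃))
        (by intros; simp only [mul_add, add_mul])
        (by intros; simp only [mul_smul_comm, smul_mul_assoc])
        (by intros; simp only [map_add, mul_add, add_mul])
        (by intros; simp only [map_smul, mul_smul_comm, smul_mul_assoc])) t)
    (by intros; simp only [mul_add, map_add, add_mul])
    (by intros; simp only [mul_smul_comm, map_smul, smul_mul_assoc])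
    (by intros; simp only [map_add, mul_add])
    (by intros; simp only [map_smul, mul_smul_comm]))

@[simp] lemma th1_tmul (w₁ w₂ w₃ a b c : H) :
    th1 w₁ w₂ w₃ (a ⊗ₜ[k] (b ⊗ₜ[k] c)) =
      aS k H (w₁ * a) * ((w₂ * b) * (aS k H c * aS k H w₃)) := rfl

noncomputable def th2 (v : H) : H ⊗[k] (H ⊗[k] H) →ₗ[k] H :=
  TensorProduct.lift (LinearMap.mk₂ k
    (fun a t => aS k H (a * v) *
      TensorProduct.lift (LinearMap.mk₂ k
        (fun b c => b * aS k H c)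
        (by intros; simp only [add_mul])
        (by intros; simp only [smul_mul_assoc])
        (by intros; simp only [map_add, mul_add])
        (by intros; simp only [map_smul, mul_smul_comm])) t)
    (by intros; simp only [add_mul, map_add])
    (by intros; simp only [smul_mul_assoc, map_smul])
    (by intros; simp only [map_add, mul_add])
    (by intros; simp only [map_smul, mul_smul_comm]))

@[simp] lemma th2_tmul (v a b c : H) :
    th2 v (a ⊗ₜ[k] (b ⊗ₜ[k] c)) = aS k H (a * v) * (b * aS k H c) := rfl

lemma aS_mul (u v : H) : aS k H (u * v) = aS k H v * aS k H u := by
  classical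
  set ρu := Coalgebra.Repr.arbitrary k u
  set ρv := Coalgebra.Repr.arbitrary k v
  set σ : (i : ρu.ι) → Coalgebra.Repr k (ρu.left i) (H × H) :=
    fun i => Coalgebra.Repr.arbitrary k (ρu.left i)
  set υu : (i : ρu.ι) → Coalgebra.Repr k (ρu.right i) (H × H) :=
    fun i => Coalgebra.Repr.arbitrary k (ρu.right i)
  set τ : (q : ρv.ι) → Coalgebra.Repr k (ρv.left q) (H × H) :=
    fun q => Coalgebra.Repr.arbitrary k (ρv.left q)
  set υv : (q : ρv.ι) → Coalgebra.Repr k (ρv.right q) (H × H) :=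
    fun q => Coalgebra.Repr.arbitrary k (ρv.right q)
  set M : H := ∑ p ∈ ρu.index, ∑ q ∈ ρv.index, ∑ j ∈ (σ p).index, ∑ l ∈ (τ q).index,
      aS k H ((σ p).left j * (τ q).left l) *
        (((σ p).right j * (τ q).right l) *
          (aS k H (ρv.right q) * aS k H (ρu.right p))) with hM
  have claimA : M = aS k H v * aS k H u := by
    have hinner : ∀ p, ∀ q,
        (∑ j ∈ (σ p).index, ∑ l ∈ (τ q).index,
          aS k H ((σ p).left j * (τ q).left l) *
            (((σ p).right j * (τ q).right l) *
              (aS k H (ρv.right q) * aS k H (ρu.right p))))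
        = (counit (R := k) (ρu.left p) * counit (R := k) (ρv.left q)) •
            (aS k H (ρv.right q) * aS k H (ρu.right p)) := by
      intro p q
      have h2 : ∑ j ∈ (σ p).index, ∑ l ∈ (τ q).index,
          aS k H ((σ p).left j * (τ q).left l) * ((σ p).right j * (τ q).right l)
          = counit (R := k) (ρu.left p * ρv.left q) • 1 := by
        rw [← sum_aS_mul (reprMul (σ p) (τ q))]
        rw [reprMul, Finset.sum_product]
      calc ∑ j ∈ (σ p).index, ∑ l ∈ (τ q).index,
            aS k H ((σ p).left j * (τ q).left l) *
              (((σ p).right j * (τ q).right l) *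
                (aS k H (ρv.right q) * aS k H (ρu.right p)))
          = (∑ j ∈ (σ p).index, ∑ l ∈ (τ q).index,
              aS k H ((σ p).left j * (τ q).left l) * ((σ p).right j * (τ q).right l)) *
              (aS k H (ρv.right q) * aS k H (ρu.right p)) := by
            rw [Finset.sum_mul]
            refine Finset.sum_congr rfl fun j _ => ?_
            rw [Finset.sum_mul]
            exact Finset.sum_congr rfl fun l _ => by simp only [mul_assoc]
        _ = (counit (R := k) (ρu.left p) * counit (R := k) (ρv.left q)) •
              (aS k H (ρv.right q) * aS k H (ρu.right p)) := by
            rw [h2, smul_mul_assoc, one_mul, Bialgebra.counit_mul]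
    calc M = ∑ p ∈ ρu.index, ∑ q ∈ ρv.index,
          (counit (R := k) (ρu.left p) * counit (R := k) (ρv.left q)) •
            (aS k H (ρv.right q) * aS k H (ρu.right p)) := by
          rw [hM]
          exact Finset.sum_congr rfl fun p _ => Finset.sum_congr rfl fun q _ => hinner p q
      _ = ∑ p ∈ ρu.index,
            (∑ q ∈ ρv.index, counit (R := k) (ρv.left q) • aS k H (ρv.right q)) *
              (counit (R := k) (ρu.left p) • aS k H (ρu.right p)) := by
          refine Finset.sum_congr rfl fun p _ => ?_
          rw [Finset.sum_mul]
          refine Finset.sum_congr rfl fun q _ => ?_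
          rw [smul_mul_assoc, mul_smul_comm, smul_smul, mul_comm]
      _ = aS k H v * aS k H u := by
          rw [← Finset.mul_sum]
          congr 1
          · calc ∑ q ∈ ρv.index, counit (R := k) (ρv.left q) • aS k H (ρv.right q)
                = aS k H (∑ q ∈ ρv.index, counit (R := k) (ρv.left q) • ρv.right q) := by
                  simp only [map_sum, map_smul]
              _ = aS k H v := by rw [sum_counit_smul ρv]
          · calc ∑ p ∈ ρu.index, counit (R := k) (ρu.left p) • aS k H (ρu.right p)
                = aS k H (∑ p ∈ ρu.index, counit (R := k) (ρu.left p) • ρu.right p) := by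
                  simp only [map_sum, map_smul]
              _ = aS k H u := by rw [sum_counit_smul ρu]
  have claimB : M = aS k H (u * v) := by
    have step1 : M = ∑ p ∈ ρu.index, ∑ j ∈ (σ p).index,
        aS k H ((σ p).left j * v) * ((σ p).right j * aS k H (ρu.right p)) := by
      rw [hM]
      refine Finset.sum_congr rfl fun p _ => ?_
      rw [Finset.sum_comm]
      refine Finset.sum_congr rfl fun j _ => ?_
      have Ev := congrArg (th1 ((σ p).left j) ((σ p).right j) (ρu.right p))
        (Coalgebra.sum_tmul_tmul_eq ρv τ υv)
      simp only [map_sum, th1_tmul] at Ev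
      rw [Ev]
      calc ∑ q ∈ ρv.index, ∑ l ∈ (υv q).index,
            aS k H ((σ p).left j * ρv.left q) *
              (((σ p).right j * (υv q).left l) *
                (aS k H ((υv q).right l) * aS k H (ρu.right p)))
          = ∑ q ∈ ρv.index, counit (R := k) (ρv.right q) •
              (aS k H ((σ p).left j * ρv.left q) *
                ((σ p).right j * aS k H (ρu.right p))) := by
            refine Finset.sum_congr rfl fun q _ => ?_
            rw [← Finset.mul_sum]
            have hl : ∑ l ∈ (υv q).index,
                ((σ p).right j * (υv q).left l) *
                  (aS k H ((υv q).right l) * aS k H (ρu.right p))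
                = counit (R := k) (ρv.right q) • ((σ p).right j * aS k H (ρu.right p)) := by
              calc ∑ l ∈ (υv q).index,
                    ((σ p).right j * (υv q).left l) *
                      (aS k H ((υv q).right l) * aS k H (ρu.right p))
                  = (σ p).right j * ((∑ l ∈ (υv q).index,
                      (υv q).left l * aS k H ((υv q).right l)) * aS k H (ρu.right p)) := by
                    rw [Finset.sum_mul, Finset.mul_sum]
                    exact Finset.sum_congr rfl fun l _ => by simp only [mul_assoc]
                _ = counit (R := k) (ρv.right q) • ((σ p).right j * aS k H (ρu.right p)) := by
                    rw [sum_mul_aS (υv q), smul_mul_assoc, one_mul, mul_smul_comm]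
            rw [hl, mul_smul_comm]
        _ = aS k H ((σ p).left j * v) * ((σ p).right j * aS k H (ρu.right p)) := by
            conv_rhs => rw [← sum_smul_counit ρv]
            simp only [Finset.mul_sum, map_sum, Finset.sum_mul, mul_smul_comm, map_smul,
              smul_mul_assoc]
    have Eu := congrArg (th2 v) (Coalgebra.sum_tmul_tmul_eq ρu σ υu)
    simp only [map_sum, th2_tmul] at Eu
    rw [step1, Eu]
    calc ∑ p ∈ ρu.index, ∑ j ∈ (υu p).index,
          aS k H (ρu.left p * v) * ((υu p).left j * aS k H ((υu p).right j))
        = ∑ p ∈ ρu.index, counit (R := k) (ρu.right p) • aS k H (ρu.left p * v) := by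
          refine Finset.sum_congr rfl fun p _ => ?_
          rw [← Finset.mul_sum, sum_mul_aS (υu p), mul_smul_comm, mul_one]
      _ = aS k H (u * v) := by
          conv_rhs => rw [← sum_smul_counit ρu]
          simp only [Finset.sum_mul, map_sum, map_smul, smul_mul_assoc]
  rw [← claimA, claimB]

noncomputable def th3 (c : H) : H ⊗[k] (H ⊗[k] H) →ₗ[k] H :=
  TensorProduct.lift (LinearMap.mk₂ k
    (fun x t => x *
      TensorProduct.lift (LinearMap.mk₂ k
        (fun y z => (c * aS k H (aS k H z)) * aS k H y)
        (by intros; simp only [map_add, mul_add, add_mul])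
        (by intros; simp only [map_smul, mul_smul_comm, smul_mul_assoc])
        (by intros; simp only [map_add, mul_add, add_mul])
        (by intros; simp only [map_smul, mul_smul_comm, smul_mul_assoc])) t)
    (by intros; simp only [add_mul])
    (by intros; simp only [smul_mul_assoc])
    (by intros; simp only [map_add, mul_add])
    (by intros; simp only [map_smul, mul_smul_comm]))

@[simp] lemma th3_tmul (c x y z : H) :
    th3 c (x ⊗ₜ[k] (y ⊗ₜ[k] z)) = x * ((c * aS k H (aS k H z)) * aS k H y) := rfl

lemma adT_tmul {κ₁ : Type*} (h y : H) (ρ : Coalgebra.Repr k h κ₁) :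
    adT k H (h ⊗ₜ[k] y) = ∑ j ∈ ρ.index, ρ.left j * y * aS k H (ρ.right j) := by
  simp only [adT, LinearMap.comp_apply, LinearMap.rTensor_tmul, LinearEquiv.coe_coe]
  rw [← ρ.eq]
  rw [TensorProduct.sum_tmul]
  simp [map_sum, TensorProduct.assoc_tmul, mulH, mul_assoc]

lemma trace (f : H →ₗ[k] k)
    (hf : ∀ a y : H, f (adT k H (a ⊗ₜ[k] y)) = counit (R := k) a * f y) (a c : H) :
    f (a * c) = f (c * aS k H (aS k H a)) := by
  classical
  set ρ := Coalgebra.Repr.arbitrary k a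
  set σ : (i : ρ.ι) → Coalgebra.Repr k (ρ.left i) (H × H) :=
    fun i => Coalgebra.Repr.arbitrary k (ρ.left i)
  set υ : (i : ρ.ι) → Coalgebra.Repr k (ρ.right i) (H × H) :=
    fun i => Coalgebra.Repr.arbitrary k (ρ.right i)
  have h0 : c * aS k H (aS k H a)
      = ∑ p ∈ ρ.index, counit (R := k) (ρ.left p) • (c * aS k H (aS k H (ρ.right p))) := by
    conv_lhs => rw [← sum_counit_smul ρ]
    simp only [map_sum, map_smul, Finset.mul_sum, mul_smul_comm]
  have h1 : f (c * aS k H (aS k H a))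
      = f (∑ p ∈ ρ.index, adT k H (ρ.left p ⊗ₜ[k] (c * aS k H (aS k H (ρ.right p))))) := by
    rw [h0, map_sum, map_sum]
    refine Finset.sum_congr rfl fun p _ => ?_
    rw [map_smul, smul_eq_mul, hf]
  have h2 : ∑ p ∈ ρ.index, adT k H (ρ.left p ⊗ₜ[k] (c * aS k H (aS k H (ρ.right p)))) = a * c := by
    calc ∑ p ∈ ρ.index, adT k H (ρ.left p ⊗ₜ[k] (c * aS k H (aS k H (ρ.right p))))
        = ∑ p ∈ ρ.index, ∑ j ∈ (σ p).index,
            th3 c ((σ p).left j ⊗ₜ[k] ((σ p).right j ⊗ₜ[k] ρ.right p)) := by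
          refine Finset.sum_congr rfl fun p _ => ?_
          rw [adT_tmul (ρ.left p) _ (σ p)]
          refine Finset.sum_congr rfl fun j _ => ?_
          rw [th3_tmul]
          simp only [mul_assoc]
      _ = ∑ p ∈ ρ.index, ∑ j ∈ (υ p).index,
            th3 c (ρ.left p ⊗ₜ[k] ((υ p).left j ⊗ₜ[k] (υ p).right j)) := by
          have E := congrArg (th3 c) (Coalgebra.sum_tmul_tmul_eq ρ σ υ)
          simpa only [map_sum] using E
      _ = ∑ p ∈ ρ.index, counit (R := k) (ρ.right p) • (ρ.left p * c) := by
          refine Finset.sum_congr rfl fun p _ => ?_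
          simp only [th3_tmul]
          have hj : ∑ j ∈ (υ p).index,
              (c * aS k H (aS k H ((υ p).right j))) * aS k H ((υ p).left j)
              = counit (R := k) (ρ.right p) • c := by
            calc ∑ j ∈ (υ p).index,
                  (c * aS k H (aS k H ((υ p).right j))) * aS k H ((υ p).left j)
                = c * ∑ j ∈ (υ p).index, aS k H ((υ p).left j * aS k H ((υ p).right j)) := by
                  rw [Finset.mul_sum]
                  refine Finset.sum_congr rfl fun j _ => ?_
                  rw [aS_mul, mul_assoc]
              _ = counit (R := k) (ρ.right p) • c := by
                  rw [← map_sum, sum_mul_aS (υ p), map_smul, aS_one, mul_smul_comm, mul_one]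
          rw [← Finset.mul_sum, hj, mul_smul_comm]
      _ = (∑ p ∈ ρ.index, counit (R := k) (ρ.right p) • ρ.left p) * c := by
          rw [Finset.sum_mul]
          simp only [smul_mul_assoc]
      _ = a * c := by rw [sum_smul_counit ρ]
  rw [h1, h2]

lemma aS2_mul (u v : H) :
    aS k H (aS k H (u * v)) = aS k H (aS k H u) * aS k H (aS k H v) := by
  rw [aS_mul, aS_mul]

lemma fS2 (f : H →ₗ[k] k)
    (hf : ∀ a y : H, f (adT k H (a ⊗ₜ[k] y)) = counit (R := k) a * f y) (a : H) :
    f (aS k H (aS k H a)) = f a := by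
  have := trace f hf a 1
  rw [mul_one, one_mul] at this
  exact this.symm

section Rmat
variable {ι : Type*} [Fintype ι]

/-- `ε ⊗ id` as an algebra hom `H ⊗ H → H`, `u ⊗ v ↦ ε(u) • v`. -/
noncomputable def e1 : H ⊗[k] H →ₐ[k] H :=
  (Algebra.TensorProduct.lid k H).toAlgHom.comp
    (Algebra.TensorProduct.map (Bialgebra.counitAlgHom k H) (AlgHom.id k H))

@[simp] lemma e1_tmul (u v : H) : e1 (u ⊗ₜ[k] v) = counit (R := k) u • v := by
  simp [e1, Algebra.TensorProduct.lid_tmul]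

/-- `id ⊗ ε` as an algebra hom `H ⊗ H → H`, `u ⊗ v ↦ ε(v) • u`. -/
noncomputable def e2 : H ⊗[k] H →ₐ[k] H :=
  (Algebra.TensorProduct.rid k k H).toAlgHom.comp
    (Algebra.TensorProduct.map (AlgHom.id k H) (Bialgebra.counitAlgHom k H))

@[simp] lemma e2_tmul (u v : H) : e2 (u ⊗ₜ[k] v) = counit (R := k) v • u := by
  simp [e2, Algebra.TensorProduct.rid_tmul]

lemma e1_comul (h : H) : e1 (comul (R := k) h) = h := by
  rw [← (Coalgebra.Repr.arbitrary k h).eq, map_sum]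
  simp only [e1_tmul]
  exact sum_counit_smul _

lemma e2_comul (h : H) : e2 (comul (R := k) h) = h := by
  rw [← (Coalgebra.Repr.arbitrary k h).eq, map_sum]
  simp only [e2_tmul]
  exact sum_smul_counit _

lemma q1 (α β : ι → H) (R' : H ⊗[k] H)
    (hinv1 : (∑ i, α i ⊗ₜ[k] β i) * R' = 1)
    (hqt2 : LinearMap.rTensor H (Coalgebra.comul (R := k)) (∑ i, α i ⊗ₜ[k] β i)
        = (∑ i, (α i ⊗ₜ[k] (1 : H)) ⊗ₜ[k] β i) * (∑ i, ((1 : H) ⊗ₜ[k] α i) ⊗ₜ[k] β i)) :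
    ∑ i, counit (R := k) (α i) • β i = 1 := by
  classical
  have happ := congrArg (Algebra.TensorProduct.map (e1 (k := k) (H := H)) (AlgHom.id k H)) hqt2
  rw [map_mul] at happ
  simp only [map_sum, LinearMap.rTensor_tmul, Algebra.TensorProduct.map_tmul,
    AlgHom.coe_id, id_eq, e1_comul, e1_tmul, Bialgebra.counit_one, one_smul] at happ
  -- happ : ∑ i, α i ⊗ₜ β i = (∑ i, (ε(α i) • 1) ⊗ₜ β i) * (∑ i, α i ⊗ₜ β i)
  have hB : (∑ i, (counit (R := k) (α i) • (1 : H)) ⊗ₜ[k] β i)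
      = (1 : H) ⊗ₜ[k] (∑ i, counit (R := k) (α i) • β i) := by
    rw [TensorProduct.tmul_sum]
    exact Finset.sum_congr rfl fun i _ => by
      rw [TensorProduct.smul_tmul]
  rw [hB] at happ
  have hBone : (1 : H) ⊗ₜ[k] (∑ i, counit (R := k) (α i) • β i) = 1 := by
    calc (1 : H) ⊗ₜ[k] (∑ i, counit (R := k) (α i) • β i)
        = ((1 : H) ⊗ₜ[k] (∑ i, counit (R := k) (α i) • β i)) * ((∑ i, α i ⊗ₜ[k] β i) * R') := by
          rw [hinv1, mul_one]
      _ = ((∑ i, α i ⊗ₜ[k] β i)) * R' := by rw [← mul_assoc, ← happ]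
      _ = 1 := hinv1
  have := congrArg (mulH k H) hBone
  simpa [mulH, Algebra.TensorProduct.one_def, LinearMap.mul'_apply] using this

lemma q2 (α β : ι → H) (R' : H ⊗[k] H)
    (hinv1 : (∑ i, α i ⊗ₜ[k] β i) * R' = 1)
    (hqt3 : LinearMap.lTensor H (Coalgebra.comul (R := k)) (∑ i, α i ⊗ₜ[k] β i)
        = (∑ i, α i ⊗ₜ[k] ((1 : H) ⊗ₜ[k] β i)) * (∑ i, α i ⊗ₜ[k] (β i ⊗ₜ[k] (1 : H)))) :
    ∑ i, counit (R := k) (β i) • α i = 1 := by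
  classical
  have happ := congrArg (Algebra.TensorProduct.map (AlgHom.id k H) (e2 (k := k) (H := H))) hqt3
  rw [map_mul] at happ
  simp only [map_sum, LinearMap.lTensor_tmul, Algebra.TensorProduct.map_tmul,
    AlgHom.coe_id, id_eq, e2_comul, e2_tmul, Bialgebra.counit_one, one_smul] at happ
  -- happ : ∑ i, α i ⊗ₜ β i = (∑ i, α i ⊗ₜ (ε(β i) • 1)) * (∑ i, α i ⊗ₜ β i)
  have hB : (∑ i, α i ⊗ₜ[k] (counit (R := k) (β i) • (1 : H)))
      = (∑ i, counit (R := k) (β i) • α i) ⊗ₜ[k] (1 : H) := by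
    rw [TensorProduct.sum_tmul]
    exact Finset.sum_congr rfl fun i _ => by
      rw [TensorProduct.smul_tmul]
  rw [hB] at happ
  have hBone : (∑ i, counit (R := k) (β i) • α i) ⊗ₜ[k] (1 : H) = 1 := by
    calc (∑ i, counit (R := k) (β i) • α i) ⊗ₜ[k] (1 : H)
        = ((∑ i, counit (R := k) (β i) • α i) ⊗ₜ[k] (1 : H)) * ((∑ i, α i ⊗ₜ[k] β i) * R') := by
          rw [hinv1, mul_one]
      _ = ((∑ i, α i ⊗ₜ[k] β i)) * R' := by rw [← mul_assoc, ← happ]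
      _ = 1 := hinv1
  have := congrArg (mulH k H) hBone
  simpa [mulH, Algebra.TensorProduct.one_def, LinearMap.mul'_apply] using this

lemma prod_expand2 (α β γ δ : ι → H) :
    (∑ i, (α i ⊗ₜ[k] γ i) ⊗ₜ[k] β i) * (∑ i, (δ i ⊗ₜ[k] α i) ⊗ₜ[k] β i)
      = ∑ i, ∑ j, ((α i * δ j) ⊗ₜ[k] (γ i * α j)) ⊗ₜ[k] (β i * β j) := by
  rw [Finset.sum_mul_sum]
  exact Finset.sum_congr rfl fun i _ => Finset.sum_congr rfl fun j _ => by
    simp [Algebra.TensorProduct.tmul_mul_tmul]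

lemma q3 (α β : ι → H) (R' : H ⊗[k] H)
    (hinv1 : (∑ i, α i ⊗ₜ[k] β i) * R' = 1)
    (hqt2 : LinearMap.rTensor H (Coalgebra.comul (R := k)) (∑ i, α i ⊗ₜ[k] β i)
        = (∑ i, (α i ⊗ₜ[k] (1 : H)) ⊗ₜ[k] β i) * (∑ i, ((1 : H) ⊗ₜ[k] α i) ⊗ₜ[k] β i)) :
    ∑ i, aS k H (α i) ⊗ₜ[k] β i = R' := by
  classical
  have hb := q1 α β R' hinv1 hqt2
  have hprod : (∑ i, (α i ⊗ₜ[k] (1 : H)) ⊗ₜ[k] β i) * (∑ i, ((1 : H) ⊗ₜ[k] α i) ⊗ₜ[k] β i)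
      = ∑ i, ∑ j, ((α i ⊗ₜ[k] α j) ⊗ₜ[k] (β i * β j)) := by
    rw [Finset.sum_mul_sum]
    exact Finset.sum_congr rfl fun i _ => Finset.sum_congr rfl fun j _ => by
      simp [Algebra.TensorProduct.tmul_mul_tmul]
  have happ := congrArg (LinearMap.rTensor H (mulH k H ∘ₗ LinearMap.rTensor H (aS k H)))
    (hqt2.trans hprod)
  simp only [map_sum, LinearMap.rTensor_tmul] at happ
  -- LHS : ∑ i, (μ ∘ rTensor S) (comul (α i)) ⊗ₜ β i
  have hLHS : ∀ i : ι, (mulH k H ∘ₗ LinearMap.rTensor H (aS k H)) (comul (R := k) (α i))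
      = counit (R := k) (α i) • 1 := by
    intro i
    have := HopfAlgebra.mul_antipode_rTensor_comul_apply (R := k) (a := α i)
    simpa [mulH, aS, Algebra.smul_def] using this
  rw [Finset.sum_congr rfl (fun i _ => by rw [hLHS i])] at happ
  have hL2 : (∑ i, (counit (R := k) (α i) • (1 : H)) ⊗ₜ[k] β i) = (1 : H ⊗[k] H) := by
    rw [Algebra.TensorProduct.one_def]
    calc ∑ i, (counit (R := k) (α i) • (1 : H)) ⊗ₜ[k] β i
        = (1 : H) ⊗ₜ[k] (∑ i, counit (R := k) (α i) • β i) := by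
          rw [TensorProduct.tmul_sum]
          exact Finset.sum_congr rfl fun i _ => by rw [TensorProduct.smul_tmul]
      _ = (1 : H) ⊗ₜ[k] (1 : H) := by rw [hb]
  rw [hL2] at happ
  -- happ : 1 = ∑ i, ∑ j, (S (α i) * α j) ⊗ₜ (β i * β j)
  have hXR : (∑ i, aS k H (α i) ⊗ₜ[k] β i) * (∑ i, α i ⊗ₜ[k] β i) = 1 := by
    rw [Finset.sum_mul_sum]
    calc ∑ i, ∑ j, (aS k H (α i) ⊗ₜ[k] β i) * (α j ⊗ₜ[k] β j)
        = ∑ i, ∑ j, (mulH k H ∘ₗ LinearMap.rTensor H (aS k H)) (α i ⊗ₜ[k] α j)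
            ⊗ₜ[k] (β i * β j) := by
          exact Finset.sum_congr rfl fun i _ => Finset.sum_congr rfl fun j _ => by
            simp [Algebra.TensorProduct.tmul_mul_tmul, mulH, LinearMap.mul'_apply]
      _ = 1 := happ.symm
  calc ∑ i, aS k H (α i) ⊗ₜ[k] β i
      = (∑ i, aS k H (α i) ⊗ₜ[k] β i) * ((∑ i, α i ⊗ₜ[k] β i) * R') := by rw [hinv1, mul_one]
    _ = ((∑ i, aS k H (α i) ⊗ₜ[k] β i) * (∑ i, α i ⊗ₜ[k] β i)) * R' := by rw [mul_assoc]
    _ = R' := by rw [hXR, one_mul]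

lemma q5 (α β : ι → H) (R' : H ⊗[k] H)
    (hinv1 : (∑ i, α i ⊗ₜ[k] β i) * R' = 1)
    (hinv2 : R' * (∑ i, α i ⊗ₜ[k] β i) = 1)
    (hqt3 : LinearMap.lTensor H (Coalgebra.comul (R := k)) (∑ i, α i ⊗ₜ[k] β i)
        = (∑ i, α i ⊗ₜ[k] ((1 : H) ⊗ₜ[k] β i)) * (∑ i, α i ⊗ₜ[k] (β i ⊗ₜ[k] (1 : H)))) :
    LinearMap.lTensor H (aS k H) R' = ∑ i, α i ⊗ₜ[k] β i := by
  classical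
  set R : H ⊗[k] H := ∑ i, α i ⊗ₜ[k] β i with hR
  obtain ⟨sR, hsR⟩ := TensorProduct.exists_finset (R := k) R'
  set F : H ⊗[k] H →ₐ[k] H ⊗[k] (H ⊗[k] H) :=
    Algebra.TensorProduct.map (AlgHom.id k H) (Bialgebra.comulAlgHom k H) with hF
  have bridge : ∀ t : H ⊗[k] H, F t = LinearMap.lTensor H (Coalgebra.comul (R := k)) t := by
    intro t
    induction t using TensorProduct.induction_on with
    | zero => simp
    | tmul u v => simp [hF, Bialgebra.comulAlgHom_apply]
    | add s t hs ht => simp [map_add, hs, ht]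
  set j12 : H ⊗[k] H →ₐ[k] H ⊗[k] (H ⊗[k] H) :=
    Algebra.TensorProduct.map (AlgHom.id k H) (Algebra.TensorProduct.includeLeft) with hj12
  set j13 : H ⊗[k] H →ₐ[k] H ⊗[k] (H ⊗[k] H) :=
    Algebra.TensorProduct.map (AlgHom.id k H) (Algebra.TensorProduct.includeRight) with hj13
  have hP13 : j13 R = ∑ i, α i ⊗ₜ[k] ((1 : H) ⊗ₜ[k] β i) := by
    rw [hR, map_sum]; rfl
  have hP12 : j12 R = ∑ i, α i ⊗ₜ[k] (β i ⊗ₜ[k] (1 : H)) := by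
    rw [hR, map_sum]; rfl
  have hFR : F R = j13 R * j12 R := by rw [bridge, hqt3, hP13, hP12]
  have h12 : j12 R' * j12 R = 1 := by rw [← map_mul, hinv2, map_one]
  have h13 : j13 R' * j13 R = 1 := by rw [← map_mul, hinv2, map_one]
  have h12' : j12 R * j12 R' = 1 := by rw [← map_mul, hinv1, map_one]
  have h13' : j13 R * j13 R' = 1 := by rw [← map_mul, hinv1, map_one]
  have hFRinv : F R' * F R = 1 := by rw [← map_mul, hinv2, map_one]
  have hY : F R' = j12 R' * j13 R' := by
    have hright : F R * (j12 R' * j13 R') = 1 := by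
      rw [hFR, mul_assoc, ← mul_assoc (j12 R), h12', one_mul, h13']
    calc F R' = F R' * (F R * (j12 R' * j13 R')) := by rw [hright, mul_one]
      _ = (F R' * F R) * (j12 R' * j13 R') := by rw [mul_assoc]
      _ = j12 R' * j13 R' := by rw [hFRinv, one_mul]
  -- apply Ψ := lTensor (u ⊗ v ↦ u * S v)
  set m2 : H ⊗[k] H →ₗ[k] H := mulH k H ∘ₗ LinearMap.lTensor H (aS k H) with hm2
  have happ := congrArg (LinearMap.lTensor H m2) hY
  -- LHS
  have hL : LinearMap.lTensor H m2 (F R')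
      = (∑ w ∈ sR, counit (R := k) w.2 • w.1) ⊗ₜ[k] (1 : H) := by
    rw [bridge, hsR]
    simp only [map_sum, LinearMap.lTensor_tmul]
    rw [TensorProduct.sum_tmul]
    refine Finset.sum_congr rfl fun w _ => ?_
    have : m2 (comul (R := k) w.2) = counit (R := k) w.2 • 1 := by
      have := HopfAlgebra.mul_antipode_lTensor_comul_apply (R := k) (a := w.2)
      simpa [hm2, mulH, aS, Algebra.smul_def] using this
    rw [this, TensorProduct.smul_tmul]
  have ha' : (∑ w ∈ sR, counit (R := k) w.2 • w.1) = 1 := by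
    have he2R : e2 (k := k) (H := H) R = 1 := by
      rw [hR, map_sum]
      simp only [e2_tmul]
      exact q2 α β R' hinv1 hqt3
    have : e2 (k := k) (H := H) R * e2 R' = 1 := by rw [← map_mul, hinv1, map_one]
    rw [he2R, one_mul] at this
    rw [← this, hsR, map_sum]
    exact Finset.sum_congr rfl fun w _ => by rw [e2_tmul]
  -- RHS
  have hRHS : LinearMap.lTensor H m2 (j12 R' * j13 R')
      = R' * LinearMap.lTensor H (aS k H) R' := by
    have hprod : j12 R' * j13 R'
        = ∑ w ∈ sR, ∑ z ∈ sR, (w.1 * z.1) ⊗ₜ[k] (w.2 ⊗ₜ[k] z.2) := by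
      have e12 : j12 R' = ∑ w ∈ sR, w.1 ⊗ₜ[k] (w.2 ⊗ₜ[k] (1 : H)) := by
        rw [hsR, map_sum]; rfl
      have e13 : j13 R' = ∑ w ∈ sR, w.1 ⊗ₜ[k] ((1 : H) ⊗ₜ[k] w.2) := by
        rw [hsR, map_sum]; rfl
      rw [e12, e13, Finset.sum_mul_sum]
      exact Finset.sum_congr rfl fun w _ => Finset.sum_congr rfl fun z _ => by
        simp [Algebra.TensorProduct.tmul_mul_tmul]
    rw [hprod]
    simp only [map_sum, LinearMap.lTensor_tmul]
    conv_rhs => rw [hsR]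
    rw [map_sum, Finset.sum_mul_sum]
    exact Finset.sum_congr rfl fun w _ => Finset.sum_congr rfl fun z _ => by
      simp [Algebra.TensorProduct.tmul_mul_tmul, hm2, mulH, LinearMap.mul'_apply]
  rw [hL, ha', hRHS] at happ
  -- happ : 1 ⊗ₜ 1 = R' * lTensor aS R'
  have hone : R' * LinearMap.lTensor H (aS k H) R' = 1 := by
    rw [← happ, Algebra.TensorProduct.one_def]
  calc LinearMap.lTensor H (aS k H) R'
      = (R * R') * LinearMap.lTensor H (aS k H) R' := by rw [hinv1, one_mul]
    _ = R * (R' * LinearMap.lTensor H (aS k H) R') := by rw [mul_assoc]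
    _ = R := by rw [hone, mul_one]

lemma q4 (α β : ι → H) (R' : H ⊗[k] H)
    (hinv1 : (∑ i, α i ⊗ₜ[k] β i) * R' = 1)
    (hinv2 : R' * (∑ i, α i ⊗ₜ[k] β i) = 1)
    (hqt2 : LinearMap.rTensor H (Coalgebra.comul (R := k)) (∑ i, α i ⊗ₜ[k] β i)
        = (∑ i, (α i ⊗ₜ[k] (1 : H)) ⊗ₜ[k] β i) * (∑ i, ((1 : H) ⊗ₜ[k] α i) ⊗ₜ[k] β i))
    (hqt3 : LinearMap.lTensor H (Coalgebra.comul (R := k)) (∑ i, α i ⊗ₜ[k] β i)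
        = (∑ i, α i ⊗ₜ[k] ((1 : H) ⊗ₜ[k] β i)) * (∑ i, α i ⊗ₜ[k] (β i ⊗ₜ[k] (1 : H)))) :
    ∑ i, aS k H (α i) ⊗ₜ[k] aS k H (β i) = ∑ i, α i ⊗ₜ[k] β i := by
  have h3 := q3 α β R' hinv1 hqt2
  have h5 := q5 α β R' hinv1 hinv2 hqt3
  calc ∑ i, aS k H (α i) ⊗ₜ[k] aS k H (β i)
      = LinearMap.lTensor H (aS k H) (∑ i, aS k H (α i) ⊗ₜ[k] β i) := by
        simp only [map_sum, LinearMap.lTensor_tmul]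
    _ = LinearMap.lTensor H (aS k H) R' := by rw [h3]
    _ = ∑ i, α i ⊗ₜ[k] β i := h5

lemma q6 (α β : ι → H) (R' : H ⊗[k] H)
    (hinv1 : (∑ i, α i ⊗ₜ[k] β i) * R' = 1)
    (hinv2 : R' * (∑ i, α i ⊗ₜ[k] β i) = 1)
    (hqt2 : LinearMap.rTensor H (Coalgebra.comul (R := k)) (∑ i, α i ⊗ₜ[k] β i)
        = (∑ i, (α i ⊗ₜ[k] (1 : H)) ⊗ₜ[k] β i) * (∑ i, ((1 : H) ⊗ₜ[k] α i) ⊗ₜ[k] β i))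
    (hqt3 : LinearMap.lTensor H (Coalgebra.comul (R := k)) (∑ i, α i ⊗ₜ[k] β i)
        = (∑ i, α i ⊗ₜ[k] ((1 : H) ⊗ₜ[k] β i)) * (∑ i, α i ⊗ₜ[k] (β i ⊗ₜ[k] (1 : H)))) :
    ∑ i, aS k H (aS k H (α i)) ⊗ₜ[k] aS k H (aS k H (β i)) = ∑ i, α i ⊗ₜ[k] β i := by
  have h4 := q4 α β R' hinv1 hinv2 hqt2 hqt3
  calc ∑ i, aS k H (aS k H (α i)) ⊗ₜ[k] aS k H (aS k H (β i))
      = TensorProduct.map (aS k H) (aS k H) (∑ i, aS k H (α i) ⊗ₜ[k] aS k H (β i)) := by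
        simp only [map_sum, TensorProduct.map_tmul]
    _ = TensorProduct.map (aS k H) (aS k H) (∑ i, α i ⊗ₜ[k] β i) := by rw [h4]
    _ = ∑ i, aS k H (α i) ⊗ₜ[k] aS k H (β i) := by
        simp only [map_sum, TensorProduct.map_tmul]
    _ = ∑ i, α i ⊗ₜ[k] β i := h4

lemma comm_comm (t : H ⊗[k] H) :
    TensorProduct.comm k H H (TensorProduct.comm k H H t) = t := by
  induction t using TensorProduct.induction_on with
  | zero => simp
  | tmul u v => simp
  | add s t hs ht => simp [map_add, hs, ht]

lemma commAlg_eq (t : H ⊗[k] H) :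
    Algebra.TensorProduct.comm k H H t = TensorProduct.comm k H H t := by
  induction t using TensorProduct.induction_on with
  | zero => simp
  | tmul u v => simp
  | add s t hs ht => simp [map_add, hs, ht]

lemma q7 (α β : ι → H) (R' : H ⊗[k] H) (x : H)
    (hinv1 : (∑ i, α i ⊗ₜ[k] β i) * R' = 1)
    (hinv2 : R' * (∑ i, α i ⊗ₜ[k] β i) = 1)
    (hqt1 : (∑ i, α i ⊗ₜ[k] β i) * Coalgebra.comul (R := k) x * R'
        = TensorProduct.comm k H H (Coalgebra.comul (R := k) x))
    (hqt2 : LinearMap.rTensor H (Coalgebra.comul (R := k)) (∑ i, α i ⊗ₜ[k] β i)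
        = (∑ i, (α i ⊗ₜ[k] (1 : H)) ⊗ₜ[k] β i) * (∑ i, ((1 : H) ⊗ₜ[k] α i) ⊗ₜ[k] β i)) :
    (∑ i, β i ⊗ₜ[k] aS k H (α i)) * Coalgebra.comul (R := k) x
      = TensorProduct.comm k H H (Coalgebra.comul (R := k) x) *
          (∑ i, β i ⊗ₜ[k] aS k H (α i)) := by
  have h3 := q3 α β R' hinv1 hqt2
  have h1 : Coalgebra.comul (R := k) x * R'
      = R' * TensorProduct.comm k H H (Coalgebra.comul (R := k) x) := by
    calc Coalgebra.comul (R := k) x * R'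
        = (R' * (∑ i, α i ⊗ₜ[k] β i)) * Coalgebra.comul (R := k) x * R' := by
          rw [hinv2, one_mul]
      _ = R' * ((∑ i, α i ⊗ₜ[k] β i) * Coalgebra.comul (R := k) x * R') := by
          rw [mul_assoc, mul_assoc, mul_assoc]
      _ = R' * TensorProduct.comm k H H (Coalgebra.comul (R := k) x) := by rw [hqt1]
  have h2 := congrArg (Algebra.TensorProduct.comm k H H) h1
  rw [map_mul, map_mul] at h2
  simp only [commAlg_eq] at h2
  rw [comm_comm] at h2
  have hτR' : TensorProduct.comm k H H R' = ∑ i, β i ⊗ₜ[k] aS k H (α i) := by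
    rw [← h3, map_sum]
    simp only [TensorProduct.comm_tmul]
  rw [hτR'] at h2
  exact h2.symm

end Rmat

section Main
variable {ι : Type*} [Fintype ι]

/-- `u ⊗ v ↦ u * y * S v` -/
noncomputable def m3 (y : H) : H ⊗[k] H →ₗ[k] H :=
  TensorProduct.lift (LinearMap.mk₂ k
    (fun u v => u * y * aS k H v)
    (by intros; simp only [add_mul])
    (by intros; simp only [smul_mul_assoc])
    (by intros; simp only [map_add, mul_add])
    (by intros; simp only [map_smul, mul_smul_comm]))

@[simp] lemma m3_tmul (y u v : H) : m3 y (u ⊗ₜ[k] v) = u * y * aS k H v := rfl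

lemma m3_comul (h y : H) : m3 y (comul (R := k) h) = adT k H (h ⊗ₜ[k] y) := by
  rw [← (Coalgebra.Repr.arbitrary k h).eq, map_sum,
    adT_tmul h y (Coalgebra.Repr.arbitrary k h)]
  simp only [m3_tmul]

/-- `t ⊗ w ↦ f (a * S w) • m3 b t` -/
noncomputable def kp (f : H →ₗ[k] k) (a b : H) : (H ⊗[k] H) ⊗[k] H →ₗ[k] H :=
  TensorProduct.lift (LinearMap.mk₂ k
    (fun t w => f (a * aS k H w) • m3 b t)
    (by intros; simp only [map_add, smul_add])
    (by intro c t w; rw [LinearMap.map_smul, smul_comm])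
    (by intros; simp only [map_add, mul_add, add_smul])
    (by intro c t w; rw [LinearMap.map_smul, mul_smul_comm, LinearMap.map_smul, smul_assoc]))

@[simp] lemma kp_tmul (f : H →ₗ[k] k) (a b : H) (t : H ⊗[k] H) (w : H) :
    kp f a b (t ⊗ₜ[k] w) = f (a * aS k H w) • m3 b t := rfl

/-- `u ⊗ v ↦ f (c₁ * φ u * c₂) • (d₁ * ψ v * d₂)` -/
noncomputable def blA (f : H →ₗ[k] k) (φ ψ : H →ₗ[k] H) (c₁ c₂ d₁ d₂ : H) :
    H ⊗[k] H →ₗ[k] H :=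
  TensorProduct.lift (LinearMap.mk₂ k
    (fun u v => f (c₁ * φ u * c₂) • (d₁ * ψ v * d₂))
    (by intros; simp only [map_add, mul_add, add_mul, add_smul])
    (by intro c u v;
        rw [LinearMap.map_smul, mul_smul_comm, smul_mul_assoc, LinearMap.map_smul, smul_assoc])
    (by intros; simp only [map_add, mul_add, add_mul, smul_add])
    (by intro c u v;
        rw [LinearMap.map_smul, mul_smul_comm, smul_mul_assoc, smul_comm]))

@[simp] lemma blA_tmul (f : H →ₗ[k] k) (φ ψ : H →ₗ[k] H) (c₁ c₂ d₁ d₂ u v : H) :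
    blA f φ ψ c₁ c₂ d₁ d₂ (u ⊗ₜ[k] v) = f (c₁ * φ u * c₂) • (d₁ * ψ v * d₂) := rfl

/-- `u ⊗ v ↦ f (c₁ * φ v * c₂) • (d₁ * ψ u * d₂)` -/
noncomputable def blB (f : H →ₗ[k] k) (φ ψ : H →ₗ[k] H) (c₁ c₂ d₁ d₂ : H) :
    H ⊗[k] H →ₗ[k] H :=
  blA f φ ψ c₁ c₂ d₁ d₂ ∘ₗ (TensorProduct.comm k H H).toLinearMap

@[simp] lemma blB_tmul (f : H →ₗ[k] k) (φ ψ : H →ₗ[k] H) (c₁ c₂ d₁ d₂ u v : H) :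
    blB f φ ψ c₁ c₂ d₁ d₂ (u ⊗ₜ[k] v) = f (c₁ * φ v * c₂) • (d₁ * ψ u * d₂) := rfl

lemma sum_apply_congr {M : Type*} [AddCommMonoid M] [Module k M]
    (L : H ⊗[k] H →ₗ[k] M) {g1 g2 : ι → H ⊗[k] H}
    (h : ∑ i, g1 i = ∑ i, g2 i) : ∑ i, L (g1 i) = ∑ i, L (g2 i) := by
  rw [← map_sum, h, map_sum]

end Main

end HopfAux

/-- If `f : H → k` is a morphism of left `H`-modules (adjoint action on `H`, trivial on `k`),
then `(id ⊗ f) ∘ Δ = (id ⊗ f) ∘ Δ̲ = (f ⊗ id) ∘ Δ̲`. -/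
theorem lTensor_comul_eq_lTensor_DeltaB_eq_rTensor_DeltaB
    (α β : ι → H) (R' : H ⊗[k] H)
    (hinv : (∑ i, α i ⊗ₜ[k] β i) * R' = 1 ∧ R' * (∑ i, α i ⊗ₜ[k] β i) = 1)
    (hqt1 : ∀ x : H, (∑ i, α i ⊗ₜ[k] β i) * Coalgebra.comul (R := k) x * R'
        = TensorProduct.comm k H H (Coalgebra.comul (R := k) x))
    (hqt2 : LinearMap.rTensor H (Coalgebra.comul (R := k)) (∑ i, α i ⊗ₜ[k] β i)
        = (∑ i, (α i ⊗ₜ[k] (1 : H)) ⊗ₜ[k] β i) * (∑ i, ((1 : H) ⊗ₜ[k] α i) ⊗ₜ[k] β i))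
    (hqt3 : LinearMap.lTensor H (Coalgebra.comul (R := k)) (∑ i, α i ⊗ₜ[k] β i)
        = (∑ i, α i ⊗ₜ[k] ((1 : H) ⊗ₜ[k] β i)) * (∑ i, α i ⊗ₜ[k] (β i ⊗ₜ[k] (1 : H))))
    (f : H →ₗ[k] k)
    (hf : ∀ x y : H, f (ad k H x y) = Coalgebra.counit (R := k) x * f y)
    (x : H) :
    TensorProduct.rid k H (LinearMap.lTensor H f (Coalgebra.comul (R := k) x))
        = TensorProduct.rid k H (LinearMap.lTensor H f (DeltaB k H α β x)) ∧
      TensorProduct.rid k H (LinearMap.lTensor H f (DeltaB k H α β x))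
        = TensorProduct.lid k H (LinearMap.rTensor H f (DeltaB k H α β x)) := by
  classical
  obtain ⟨hinv1, hinv2⟩ := hinv
  have hfA : ∀ h y : H, f (adT k H (h ⊗ₜ[k] y)) = Coalgebra.counit (R := k) h * f y :=
    fun h y => hf h y
  have hq1 := HopfAux.q1 α β R' hinv1 hqt2
  have hq3 := HopfAux.q3 α β R' hinv1 hqt2
  have hq4 := HopfAux.q4 α β R' hinv1 hinv2 hqt2 hqt3
  have hq6 := HopfAux.q6 α β R' hinv1 hinv2 hqt2 hqt3
  have hq7 := HopfAux.q7 α β R' x hinv1 hinv2 (hqt1 x) hqt2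
  set ρ := Coalgebra.Repr.arbitrary k x with hρdef
  have hDB : DeltaB k H α β x
      = ∑ i, ∑ p ∈ ρ.index, (ρ.left p * aS k H (β i)) ⊗ₜ[k] adT k H (α i ⊗ₜ[k] ρ.right p) := by
    simp only [DeltaB, LinearMap.sum_apply, LinearMap.comp_apply]
    refine Finset.sum_congr rfl fun i _ => ?_
    rw [← ρ.eq, map_sum]
    simp only [TensorProduct.map_tmul, LinearMap.mulRight_apply]
    rfl
  have h1R : TensorProduct.rid k H (LinearMap.lTensor H f (DeltaB k H α β x))
      = ∑ p ∈ ρ.index, f (ρ.right p) • ρ.left p := by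
    rw [hDB]
    simp only [map_sum, LinearMap.lTensor_tmul, TensorProduct.rid_tmul]
    rw [Finset.sum_comm]
    refine Finset.sum_congr rfl fun p _ => ?_
    calc ∑ i, f (adT k H (α i ⊗ₜ[k] ρ.right p)) • (ρ.left p * aS k H (β i))
        = ∑ i, f (ρ.right p) •
            (ρ.left p * (Coalgebra.counit (R := k) (α i) • aS k H (β i))) := by
          refine Finset.sum_congr rfl fun i _ => ?_
          rw [hfA (α i) (ρ.right p), mul_comm, mul_smul, mul_smul_comm]
      _ = f (ρ.right p) •
            (ρ.left p * aS k H (∑ i, Coalgebra.counit (R := k) (α i) • β i)) := by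
          simp only [map_sum, map_smul, Finset.mul_sum, Finset.smul_sum]
      _ = f (ρ.right p) • ρ.left p := by rw [hq1, HopfAux.aS_one, mul_one]
  have h1L : TensorProduct.rid k H (LinearMap.lTensor H f (Coalgebra.comul (R := k) x))
      = ∑ p ∈ ρ.index, f (ρ.right p) • ρ.left p := by
    rw [← ρ.eq]
    simp only [map_sum, LinearMap.lTensor_tmul, TensorProduct.rid_tmul]
  refine ⟨h1L.trans h1R.symm, ?_⟩
  rw [h1R]
  have h2L : TensorProduct.lid k H (LinearMap.rTensor H f (DeltaB k H α β x))
      = ∑ i, ∑ p ∈ ρ.index,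
          f (ρ.left p * aS k H (β i)) • adT k H (α i ⊗ₜ[k] ρ.right p) := by
    rw [hDB]
    simp only [map_sum, LinearMap.rTensor_tmul, TensorProduct.lid_tmul]
  rw [h2L]
  symm
  -- the two substitution equalities for step D
  have hD' : ∑ i, ∑ p ∈ ρ.index, (β i * ρ.left p) ⊗ₜ[k] (aS k H (α i) * ρ.right p)
      = ∑ p ∈ ρ.index, ∑ i, (ρ.right p * β i) ⊗ₜ[k] (ρ.left p * aS k H (α i)) := by
    have hDL : (∑ i, β i ⊗ₜ[k] aS k H (α i)) * Coalgebra.comul (R := k) x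
        = ∑ i, ∑ p ∈ ρ.index, (β i * ρ.left p) ⊗ₜ[k] (aS k H (α i) * ρ.right p) := by
      rw [← ρ.eq, Finset.sum_mul_sum]
      exact Finset.sum_congr rfl fun i _ => Finset.sum_congr rfl fun p _ => by
        simp [Algebra.TensorProduct.tmul_mul_tmul]
    have hDR : TensorProduct.comm k H H (Coalgebra.comul (R := k) x) *
          (∑ i, β i ⊗ₜ[k] aS k H (α i))
        = ∑ p ∈ ρ.index, ∑ i, (ρ.right p * β i) ⊗ₜ[k] (ρ.left p * aS k H (α i)) := by
      rw [← ρ.eq, map_sum]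
      simp only [TensorProduct.comm_tmul]
      rw [Finset.sum_mul_sum]
      exact Finset.sum_congr rfl fun p _ => Finset.sum_congr rfl fun i _ => by
        simp [Algebra.TensorProduct.tmul_mul_tmul]
    rw [← hDL, ← hDR, hq7]
  have hG : ∑ i, ∑ j, (aS k H (α i) * α j) ⊗ₜ[k] (β i * β j) = (1 : H) ⊗ₜ[k] (1 : H) := by
    calc ∑ i, ∑ j, (aS k H (α i) * α j) ⊗ₜ[k] (β i * β j)
        = (∑ i, aS k H (α i) ⊗ₜ[k] β i) * (∑ i, α i ⊗ₜ[k] β i) := by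
          rw [Finset.sum_mul_sum]
          exact Finset.sum_congr rfl fun i _ => Finset.sum_congr rfl fun j _ => by
            simp [Algebra.TensorProduct.tmul_mul_tmul]
      _ = R' * (∑ i, α i ⊗ₜ[k] β i) := by rw [hq3]
      _ = 1 := hinv2
      _ = (1 : H) ⊗ₜ[k] (1 : H) := Algebra.TensorProduct.one_def
  -- main chain
  calc ∑ i, ∑ p ∈ ρ.index, f (ρ.left p * aS k H (β i)) • adT k H (α i ⊗ₜ[k] ρ.right p)
      -- step A
      = ∑ p ∈ ρ.index, ∑ i, ∑ j,
          f (ρ.left p * aS k H (β i * β j)) • (α i * ρ.right p * aS k H (α j)) := by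
        rw [Finset.sum_comm]
        refine Finset.sum_congr rfl fun p _ => ?_
        calc ∑ i, f (ρ.left p * aS k H (β i)) • adT k H (α i ⊗ₜ[k] ρ.right p)
            = ∑ i, HopfAux.kp f (ρ.left p) (ρ.right p)
                ((Coalgebra.comul (R := k) (α i)) ⊗ₜ[k] β i) := by
              refine Finset.sum_congr rfl fun i _ => ?_
              rw [HopfAux.kp_tmul, HopfAux.m3_comul]
          _ = HopfAux.kp f (ρ.left p) (ρ.right p)
                (LinearMap.rTensor H (Coalgebra.comul (R := k)) (∑ i, α i ⊗ₜ[k] β i)) := by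
              simp only [map_sum, LinearMap.rTensor_tmul]
          _ = HopfAux.kp f (ρ.left p) (ρ.right p)
                (∑ i, ∑ j, (α i ⊗ₜ[k] α j) ⊗ₜ[k] (β i * β j)) := by
              rw [hqt2, Finset.sum_mul_sum]
              congr 1
              exact Finset.sum_congr rfl fun i _ => Finset.sum_congr rfl fun j _ => by
                simp [Algebra.TensorProduct.tmul_mul_tmul]
          _ = ∑ i, ∑ j,
                f (ρ.left p * aS k H (β i * β j)) • (α i * ρ.right p * aS k H (α j)) := by
              rw [map_sum]
              exact Finset.sum_congr rfl fun i _ => by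
                rw [map_sum]
                exact Finset.sum_congr rfl fun j _ => by
                  rw [HopfAux.kp_tmul, HopfAux.m3_tmul]
    -- step B : trace + antimultiplicativity
    _ = ∑ p ∈ ρ.index, ∑ i, ∑ j,
          f (aS k H (β j) * (aS k H (β i) * aS k H (aS k H (ρ.left p)))) •
            (α i * ρ.right p * aS k H (α j)) := by
        refine Finset.sum_congr rfl fun p _ => Finset.sum_congr rfl fun i _ =>
          Finset.sum_congr rfl fun j _ => ?_
        rw [HopfAux.trace f hfA, HopfAux.aS_mul, mul_assoc]
    -- step Cj : substitute (α,β) → (Sα,Sβ) in the j sum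
    _ = ∑ p ∈ ρ.index, ∑ i, ∑ j,
          f (aS k H (aS k H (β j)) * (aS k H (β i) * aS k H (aS k H (ρ.left p)))) •
            (α i * ρ.right p * aS k H (aS k H (α j))) := by
        refine Finset.sum_congr rfl fun p _ => Finset.sum_congr rfl fun i _ => ?_
        have := HopfAux.sum_apply_congr
          (HopfAux.blB f (aS k H) (aS k H) 1
            (aS k H (β i) * aS k H (aS k H (ρ.left p))) (α i * ρ.right p) 1)
          hq4.symm
        simpa only [HopfAux.blB_tmul, one_mul, mul_one, LinearMap.id_coe, id_eq] using this
    -- step Ci : substitute in the i sum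
    _ = ∑ p ∈ ρ.index, ∑ j, ∑ i,
          f (aS k H (aS k H (β j)) * (aS k H (aS k H (β i)) * aS k H (aS k H (ρ.left p)))) •
            (aS k H (α i) * (ρ.right p * aS k H (aS k H (α j)))) := by
        refine Finset.sum_congr rfl fun p _ => ?_
        rw [Finset.sum_comm]
        refine Finset.sum_congr rfl fun j _ => ?_
        have := HopfAux.sum_apply_congr
          (HopfAux.blB f (aS k H) LinearMap.id (aS k H (aS k H (β j)))
            (aS k H (aS k H (ρ.left p))) 1 (ρ.right p * aS k H (aS k H (α j))))
          hq4.symm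
        simp only [HopfAux.blB_tmul, one_mul, mul_one, LinearMap.id_coe, id_eq] at this
        calc ∑ i, f (aS k H (aS k H (β j)) * (aS k H (β i) * aS k H (aS k H (ρ.left p)))) •
              (α i * ρ.right p * aS k H (aS k H (α j)))
            = ∑ i, f (aS k H (aS k H (β j)) * aS k H (β i) * aS k H (aS k H (ρ.left p))) •
                (α i * (ρ.right p * aS k H (aS k H (α j)))) := by
              refine Finset.sum_congr rfl fun i _ => by rw [mul_assoc, mul_assoc]
          _ = ∑ i, f (aS k H (aS k H (β j)) * aS k H (aS k H (β i)) *
                  aS k H (aS k H (ρ.left p))) •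
                (aS k H (α i) * (ρ.right p * aS k H (aS k H (α j)))) := this
          _ = ∑ i, f (aS k H (aS k H (β j)) * (aS k H (aS k H (β i)) *
                  aS k H (aS k H (ρ.left p)))) •
                (aS k H (α i) * (ρ.right p * aS k H (aS k H (α j)))) := by
              refine Finset.sum_congr rfl fun i _ => by rw [mul_assoc]
    -- step B2 : remove the double antipodes inside f
    _ = ∑ p ∈ ρ.index, ∑ j, ∑ i,
          f (β j * (β i * ρ.left p)) •
            (aS k H (α i) * (ρ.right p * aS k H (aS k H (α j)))) := by
        refine Finset.sum_congr rfl fun p _ => Finset.sum_congr rfl fun j _ =>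
          Finset.sum_congr rfl fun i _ => ?_
        congr 1
        rw [← HopfAux.aS2_mul, ← HopfAux.aS2_mul, HopfAux.fS2 f hfA]
    -- step D : move across Δx using quasitriangularity
    _ = ∑ j, ∑ p ∈ ρ.index, ∑ i,
          f (β j * (ρ.right p * β i)) •
            (ρ.left p * aS k H (α i) * aS k H (aS k H (α j))) := by
        rw [Finset.sum_comm]
        refine Finset.sum_congr rfl fun j _ => ?_
        have := congrArg (HopfAux.blA f LinearMap.id LinearMap.id (β j) 1 1
          (aS k H (aS k H (α j)))) hD'
        simp only [map_sum, HopfAux.blA_tmul, one_mul, mul_one,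
          LinearMap.id_coe, id_eq] at this
        calc ∑ p ∈ ρ.index, ∑ i, f (β j * (β i * ρ.left p)) •
              (aS k H (α i) * (ρ.right p * aS k H (aS k H (α j))))
            = ∑ i, ∑ p ∈ ρ.index, f (β j * (β i * ρ.left p)) •
                (aS k H (α i) * ρ.right p * aS k H (aS k H (α j))) := by
              rw [Finset.sum_comm]
              exact Finset.sum_congr rfl fun i _ => Finset.sum_congr rfl fun p _ => by
                rw [mul_assoc]
          _ = ∑ p ∈ ρ.index, ∑ i, f (β j * (ρ.right p * β i)) •
                (ρ.left p * aS k H (α i) * aS k H (aS k H (α j))) := this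
    -- step E : trace on the j pair
    _ = ∑ p ∈ ρ.index, ∑ i, ∑ j,
          f ((ρ.right p * β i) * aS k H (aS k H (β j))) •
            (ρ.left p * aS k H (α i) * aS k H (aS k H (α j))) := by
        rw [Finset.sum_comm]
        refine Finset.sum_congr rfl fun p _ => ?_
        rw [Finset.sum_comm]
        refine Finset.sum_congr rfl fun i _ => Finset.sum_congr rfl fun j _ => ?_
        rw [HopfAux.trace f hfA]
    -- step F : substitute back in the j sum
    _ = ∑ p ∈ ρ.index, ∑ i, ∑ j,
          f ((ρ.right p * β i) * β j) • (ρ.left p * aS k H (α i) * α j) := by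
        refine Finset.sum_congr rfl fun p _ => Finset.sum_congr rfl fun i _ => ?_
        have := HopfAux.sum_apply_congr
          (HopfAux.blB f LinearMap.id LinearMap.id (ρ.right p * β i) 1
            (ρ.left p * aS k H (α i)) 1) hq6
        simpa only [HopfAux.blB_tmul, one_mul, mul_one, LinearMap.id_coe, id_eq] using this
    -- step G : collapse with R' R = 1
    _ = ∑ p ∈ ρ.index, f (ρ.right p) • ρ.left p := by
        refine Finset.sum_congr rfl fun p _ => ?_
        calc ∑ i, ∑ j, f ((ρ.right p * β i) * β j) • (ρ.left p * aS k H (α i) * α j)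
            = ∑ i, ∑ j, HopfAux.blB f LinearMap.id LinearMap.id (ρ.right p) 1 (ρ.left p) 1
                ((aS k H (α i) * α j) ⊗ₜ[k] (β i * β j)) := by
              refine Finset.sum_congr rfl fun i _ => Finset.sum_congr rfl fun j _ => ?_
              simp only [HopfAux.blB_tmul, one_mul, mul_one, LinearMap.id_coe, id_eq,
                mul_assoc]
          _ = HopfAux.blB f LinearMap.id LinearMap.id (ρ.right p) 1 (ρ.left p) 1
                ((1 : H) ⊗ₜ[k] (1 : H)) := by
              rw [← hG, map_sum]
              exact Finset.sum_congr rfl fun i _ => by rw [map_sum]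
          _ = f (ρ.right p) • ρ.left p := by
              simp only [HopfAux.blB_tmul, one_mul, mul_one, LinearMap.id_coe, id_eq]
end

section
/- Let χ : H → k be a k-linear map such that χ(x ▷ y) = ε(x) χ(y) for all x, y ∈ H and χ is a left integral on H, i.e. Σ x₍₁₎ χ(x₍₂₎) = χ(x)·1 for all x ∈ H. Then (χ ⊗ χ) ∘ (μ ⊗ id_H) ∘ (id_H ⊗ Δ̲) = χ ⊗ χ as maps H ⊗ H → k, where μ is the multiplication of H; elementwise, Σ χ(x · y⟨1⟩) χ(y⟨2⟩) = χ(x) χ(y) for all x, y ∈ H, where Δ̲(y) = Σ y⟨1⟩ ⊗ y⟨2⟩. (This is the computation used in the paper's proof that the Hennings-type invariant is unchanged by handle-slide moves.) -/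
open scoped TensorProduct
open TensorProduct

variable (k : Type*) [CommRing k] (H : Type*) [Ring H] [HopfAlgebra k H]

variable {ι : Type*} [Fintype ι]

private lemma aS_one' : aS k H 1 = 1 := by
  have h := HopfAlgebra.mul_antipode_rTensor_comul_apply (R := k) (A := H) 1
  rw [Bialgebra.comul_one, Algebra.TensorProduct.one_def] at h
  simpa [aS] using h

/-- For a left-integral left `H`-module morphism `χ : H → k` one has
`(χ ⊗ χ) ∘ (μ ⊗ id) ∘ (id ⊗ Δ̲) = χ ⊗ χ`: `Σ χ(x·y⟨1⟩) χ(y⟨2⟩) = χ(x) χ(y)`. -/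
theorem chi_handle_slide
    (α β : ι → H) (R' : H ⊗[k] H)
    (hinv : (∑ i, α i ⊗ₜ[k] β i) * R' = 1 ∧ R' * (∑ i, α i ⊗ₜ[k] β i) = 1)
    (hqt1 : ∀ x : H, (∑ i, α i ⊗ₜ[k] β i) * Coalgebra.comul (R := k) x * R'
        = TensorProduct.comm k H H (Coalgebra.comul (R := k) x))
    (hqt2 : LinearMap.rTensor H (Coalgebra.comul (R := k)) (∑ i, α i ⊗ₜ[k] β i)
        = (∑ i, (α i ⊗ₜ[k] (1 : H)) ⊗ₜ[k] β i) * (∑ i, ((1 : H) ⊗ₜ[k] α i) ⊗ₜ[k] β i))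
    (hqt3 : LinearMap.lTensor H (Coalgebra.comul (R := k)) (∑ i, α i ⊗ₜ[k] β i)
        = (∑ i, α i ⊗ₜ[k] ((1 : H) ⊗ₜ[k] β i)) * (∑ i, α i ⊗ₜ[k] (β i ⊗ₜ[k] (1 : H))))
    (χ : H →ₗ[k] k)
    (hχ : ∀ x y : H, χ (ad k H x y) = Coalgebra.counit (R := k) x * χ y)
    (hint : ∀ x : H,
       TensorProduct.rid k H (LinearMap.lTensor H χ (Coalgebra.comul (R := k) x))
         = χ x • (1 : H))
    (x y : H) :
    LinearMap.mul' k k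
        (TensorProduct.map (χ ∘ₗ LinearMap.mulLeft k x) χ (DeltaB k H α β y))
      = χ x * χ y := by
  classical
  have hχ' : ∀ u b : H, χ (adL k H u b) = Coalgebra.counit (R := k) u * χ b := hχ
  set Rm : H ⊗[k] H := ∑ i, α i ⊗ₜ[k] β i with hRm
  -- Step A : ∑ i, ε(αᵢ) • βᵢ = 1
  have hb : (∑ i, Coalgebra.counit (R := k) (α i) • β i) = (1 : H) := by
    let ε' : H →ₐ[k] k := Bialgebra.counitAlgHom k H
    let F₁ : H ⊗[k] H →ₐ[k] H :=
      (Algebra.TensorProduct.lid k H).toAlgHom.comp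
        (Algebra.TensorProduct.map ε' (AlgHom.id k H))
    let F : (H ⊗[k] H) ⊗[k] H →ₐ[k] H ⊗[k] H :=
      Algebra.TensorProduct.map F₁ (AlgHom.id k H)
    have hF₁ : ∀ a : H, F₁ (Coalgebra.comul (R := k) a) = a := by
      intro a
      have hlin : (F₁ : H ⊗[k] H →ₗ[k] H) =
          (TensorProduct.lid k H).toLinearMap ∘ₗ
            LinearMap.rTensor H (Coalgebra.counit (R := k)) := by
        ext a' b'
        simp [F₁, ε', Algebra.TensorProduct.lid, Bialgebra.counitAlgHom]
      have := congrArg (TensorProduct.lid k H) (Coalgebra.rTensor_counit_comul (R := k) a)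
      calc F₁ (Coalgebra.comul (R := k) a)
          = (F₁ : H ⊗[k] H →ₗ[k] H) (Coalgebra.comul (R := k) a) := rfl
        _ = (TensorProduct.lid k H)
              (LinearMap.rTensor H (Coalgebra.counit (R := k))
                (Coalgebra.comul (R := k) a)) := by rw [hlin]; rfl
        _ = a := by rw [Coalgebra.rTensor_counit_comul]; simp
    have hFleft : F (LinearMap.rTensor H (Coalgebra.comul (R := k)) Rm) = Rm := by
      rw [hRm]
      simp only [map_sum, LinearMap.rTensor_tmul]
      refine Finset.sum_congr rfl fun i _ => ?_
      simp [F, hF₁ (α i)]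
    have hFX : F (∑ i, (α i ⊗ₜ[k] (1 : H)) ⊗ₜ[k] β i)
        = (1 : H) ⊗ₜ[k] (∑ i, Coalgebra.counit (R := k) (α i) • β i) := by
      simp only [map_sum, tmul_sum]
      refine Finset.sum_congr rfl fun i _ => ?_
      simp only [F, F₁, ε', Algebra.TensorProduct.map_tmul, AlgHom.coe_id, id_eq,
        AlgHom.coe_comp, Function.comp_apply, AlgEquiv.toAlgHom_eq_coe, AlgHom.coe_coe,
        Algebra.TensorProduct.lid_tmul, Bialgebra.counitAlgHom_apply]
      erw [Algebra.TensorProduct.lid_tmul]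
      rw [smul_tmul]
    have hFY : F (∑ i, ((1 : H) ⊗ₜ[k] α i) ⊗ₜ[k] β i) = Rm := by
      rw [hRm]
      simp only [map_sum]
      refine Finset.sum_congr rfl fun i _ => ?_
      simp [F, F₁, ε']
    have h2 := congrArg F hqt2
    rw [map_mul, hFX, hFY, hFleft] at h2
    -- h2 : Rm = (1 ⊗ b) * Rm
    have h3 := congrArg (· * R') h2
    rw [hinv.1, mul_assoc, hinv.1, mul_one] at h3
    -- h3 : 1 = 1 ⊗ b
    have h4 := congrArg
      ((TensorProduct.lid k H).toLinearMap ∘ₗ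
        LinearMap.rTensor H (Coalgebra.counit (R := k))) h3
    simpa [Algebra.TensorProduct.one_def] using h4.symm
  -- Step B : the main computation
  have hterm : ∀ w u : H,
      LinearMap.mul' k k
        (TensorProduct.map (χ ∘ₗ LinearMap.mulLeft k x) χ
          (TensorProduct.map (LinearMap.mulRight k w) (adL k H u)
            (Coalgebra.comul (R := k) y)))
      = Coalgebra.counit (R := k) u * (χ y * χ (x * w)) := by
    intro w u
    have hmap : (LinearMap.mul' k k) ∘ₗ
        (TensorProduct.map (χ ∘ₗ LinearMap.mulLeft k x) χ) ∘ₗ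
        (TensorProduct.map (LinearMap.mulRight k w) (adL k H u))
        = Coalgebra.counit (R := k) u •
          ((χ ∘ₗ LinearMap.mulRight k w ∘ₗ LinearMap.mulLeft k x) ∘ₗ
            (TensorProduct.rid k H).toLinearMap ∘ₗ LinearMap.lTensor H χ) := by
      ext a' b'
      simp only [LinearMap.coe_comp, Function.comp_apply, TensorProduct.map_tmul,
        LinearMap.mul'_apply, LinearMap.mulRight_apply, LinearMap.mulLeft_apply,
        LinearMap.smul_apply, LinearMap.lTensor_tmul, TensorProduct.rid_tmul,
        map_smul, smul_eq_mul, AlgebraTensorModule.curry_apply, curry_apply,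
        LinearMap.coe_restrictScalars]
      rw [hχ' u b']
      simp only [LinearEquiv.coe_coe, TensorProduct.rid_tmul, mul_smul_comm, smul_mul_assoc, map_smul,
        smul_eq_mul, mul_assoc]
      ring
    have := LinearMap.congr_fun hmap (Coalgebra.comul (R := k) y)
    simp only [LinearMap.coe_comp, Function.comp_apply, LinearMap.smul_apply,
      smul_eq_mul, LinearMap.mulLeft_apply, LinearMap.mulRight_apply,
      LinearEquiv.coe_coe] at this
    rw [hint y] at this
    rw [this]
    simp only [mul_smul_comm, smul_mul_assoc, map_smul, smul_eq_mul, mul_one]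
  have hgoal : LinearMap.mul' k k
      (TensorProduct.map (χ ∘ₗ LinearMap.mulLeft k x) χ (DeltaB k H α β y))
      = ∑ i, Coalgebra.counit (R := k) (α i) * (χ y * χ (x * aS k H (β i))) := by
    simp only [DeltaB, LinearMap.sum_apply, LinearMap.coe_comp, Function.comp_apply,
      map_sum]
    exact Finset.sum_congr rfl fun i _ => hterm (aS k H (β i)) (α i)
  have hsum : χ y * χ (x * aS k H (∑ i, Coalgebra.counit (R := k) (α i) • β i))
      = ∑ i, Coalgebra.counit (R := k) (α i) * (χ y * χ (x * aS k H (β i))) := by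
    rw [map_sum, Finset.mul_sum, map_sum, Finset.mul_sum]
    refine Finset.sum_congr rfl fun i _ => ?_
    rw [map_smul, mul_smul_comm, map_smul, smul_eq_mul]
    ring
  rw [hgoal, ← hsum, hb, aS_one', mul_one, mul_comm]
end

section
/- For every x ∈ H, the transmuted comultiplication admits the alternative expression Δ̲(x) = Σᵢ Σ (βᵢ ▷ x₍₂₎) ⊗ αᵢ x₍₁₎; that is, Σᵢ Σ x₍₁₎ S(βᵢ) ⊗ (αᵢ ▷ x₍₂₎) = Σᵢ Σ (βᵢ ▷ x₍₂₎) ⊗ αᵢ x₍₁₎ in H ⊗ H. -/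
open scoped TensorProduct
open TensorProduct

variable (k : Type*) [CommRing k] (H : Type*) [Ring H] [HopfAlgebra k H]

variable {ι : Type*} [Fintype ι]

section AuxAntipode

variable {k : Type*} [CommRing k] {H : Type*} [Ring H] [HopfAlgebra k H]

local notation "S" => HopfAlgebra.antipode (R := k)

/-- Product of two comultiplication representations. -/
noncomputable def HopfAux.reprMul_s7 {a b : H} {ιa ιb : Type*} (ra : Coalgebra.Repr k a ιa)
    (rb : Coalgebra.Repr k b ιb) :
    Coalgebra.Repr k (a * b) (ιa × ιb) where
  index := ra.index ×ˢ rb.index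
  left := fun p => ra.left p.1 * rb.left p.2
  right := fun p => ra.right p.1 * rb.right p.2
  eq := by
    rw [Bialgebra.comul_mul, ← ra.eq, ← rb.eq, Finset.sum_mul_sum, Finset.sum_product]
    simp [Algebra.TensorProduct.tmul_mul_tmul]

namespace HopfAux

lemma mul_algebraMap_eq_smul (x : H) (c : k) : x * algebraMap k H c = c • x := by
  rw [← Algebra.commutes, ← Algebra.smul_def]

lemma sum_counit_smul_right {a : H} {ιa : Type*} (r : Coalgebra.Repr k a ιa) :
    ∑ i ∈ r.index, Coalgebra.counit (R := k) (r.left i) • r.right i = a := by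
  have h := congrArg (TensorProduct.lid k H) (Coalgebra.sum_counit_tmul_eq r)
  rw [map_sum] at h
  simp only [TensorProduct.lid_tmul] at h
  simpa using h

lemma sum_counit_smul_left {a : H} {ιa : Type*} (r : Coalgebra.Repr k a ιa) :
    ∑ i ∈ r.index, Coalgebra.counit (R := k) (r.right i) • r.left i = a := by
  have h := congrArg (TensorProduct.rid k H) (Coalgebra.sum_tmul_counit_eq r)
  rw [map_sum] at h
  simp only [TensorProduct.rid_tmul] at h
  simpa using h

lemma sum_counit_smul_antipode_left {a : H} {ιa : Type*} (r : Coalgebra.Repr k a ιa) :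
    ∑ i ∈ r.index, Coalgebra.counit (R := k) (r.right i) • S (r.left i) = S a := by
  conv_rhs => rw [← sum_counit_smul_left r]
  rw [map_sum]
  simp

lemma sum_mul_antipode_product {a b : H} {ιa ιb : Type*} (ra : Coalgebra.Repr k a ιa)
    (rb : Coalgebra.Repr k b ιb) :
    ∑ j ∈ ra.index, ∑ j' ∈ rb.index,
      (ra.left j * rb.left j') * S (ra.right j * rb.right j')
      = algebraMap k H (Coalgebra.counit (R := k) a * Coalgebra.counit (R := k) b) := by
  have h := HopfAlgebra.sum_mul_antipode_eq_algebraMap_counit (R := k) (reprMul_s7 ra rb)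
  simp only [reprMul_s7, Finset.sum_product] at h
  rw [h, Bialgebra.counit_mul]

lemma sum_antipode_mul_assoc {a : H} {ιa : Type*} (r : Coalgebra.Repr k a ιa) (W : H) :
    ∑ j ∈ r.index, S (r.left j) * (r.right j * W)
      = Coalgebra.counit (R := k) a • W := by
  simp only [← mul_assoc]
  rw [← Finset.sum_mul, HopfAlgebra.sum_antipode_mul_eq_algebraMap_counit, ← Algebra.smul_def]

/-- The 6-linear gadget `(a¹⊗(a²⊗a³))⊗(b¹⊗(b²⊗b³)) ↦ S b¹ * S a¹ * (a²*b² * S(a³*b³))`. -/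
noncomputable def Lam : (H ⊗[k] (H ⊗[k] H)) ⊗[k] (H ⊗[k] (H ⊗[k] H)) →ₗ[k] H :=
  LinearMap.mul' k H ∘ₗ
  LinearMap.lTensor H (LinearMap.mul' k H) ∘ₗ
  TensorProduct.map
    (LinearMap.mul' k H ∘ₗ TensorProduct.map S S ∘ₗ (TensorProduct.comm k H H).toLinearMap)
    (TensorProduct.map (LinearMap.mul' k H) (S ∘ₗ LinearMap.mul' k H)) ∘ₗ
  LinearMap.lTensor (H ⊗[k] H) (tensorTensorTensorComm k H H H H).toLinearMap ∘ₗ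
  (tensorTensorTensorComm k H (H ⊗[k] H) H (H ⊗[k] H)).toLinearMap

lemma Lam_tmul (a1 a2 a3 b1 b2 b3 : H) :
    Lam ((a1 ⊗ₜ[k] (a2 ⊗ₜ[k] a3)) ⊗ₜ[k] (b1 ⊗ₜ[k] (b2 ⊗ₜ[k] b3))) =
      (S b1 * S a1) * ((a2 * b2) * S (a3 * b3)) := by
  simp [Lam, tensorTensorTensorComm_tmul]

theorem antipode_mul (a b : H) : S (a * b) = S b * S a := by
  classical
  set ra := Coalgebra.Repr.arbitrary k a with hra
  set rb := Coalgebra.Repr.arbitrary k b with hrb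
  let ra1 : ∀ i, Coalgebra.Repr k (ra.left i) (H × H) := fun i => Coalgebra.Repr.arbitrary k _
  let ra2 : ∀ i, Coalgebra.Repr k (ra.right i) (H × H) := fun i => Coalgebra.Repr.arbitrary k _
  let rb1 : ∀ i, Coalgebra.Repr k (rb.left i) (H × H) := fun i => Coalgebra.Repr.arbitrary k _
  let rb2 : ∀ i, Coalgebra.Repr k (rb.right i) (H × H) := fun i => Coalgebra.Repr.arbitrary k _
  have hEa := Coalgebra.sum_tmul_tmul_eq ra ra1 ra2
  have hEb := Coalgebra.sum_tmul_tmul_eq rb rb1 rb2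
  have key : Lam ((∑ i ∈ ra.index, ∑ j ∈ (ra1 i).index,
        (ra1 i).left j ⊗ₜ[k] ((ra1 i).right j ⊗ₜ[k] ra.right i)) ⊗ₜ[k]
      (∑ i ∈ rb.index, ∑ j ∈ (rb1 i).index,
        (rb1 i).left j ⊗ₜ[k] ((rb1 i).right j ⊗ₜ[k] rb.right i)))
      = Lam ((∑ i ∈ ra.index, ∑ j ∈ (ra2 i).index,
        ra.left i ⊗ₜ[k] ((ra2 i).left j ⊗ₜ[k] (ra2 i).right j)) ⊗ₜ[k]
      (∑ i ∈ rb.index, ∑ j ∈ (rb2 i).index,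
        rb.left i ⊗ₜ[k] ((rb2 i).left j ⊗ₜ[k] (rb2 i).right j))) := by
    rw [hEa, hEb]
  have hR : Lam ((∑ i ∈ ra.index, ∑ j ∈ (ra2 i).index,
        ra.left i ⊗ₜ[k] ((ra2 i).left j ⊗ₜ[k] (ra2 i).right j)) ⊗ₜ[k]
      (∑ i ∈ rb.index, ∑ j ∈ (rb2 i).index,
        rb.left i ⊗ₜ[k] ((rb2 i).left j ⊗ₜ[k] (rb2 i).right j)))
      = S b * S a := by
    simp only [sum_tmul, tmul_sum, map_sum, Lam_tmul]
    calc
      _ = ∑ i' ∈ rb.index, ∑ i ∈ ra.index,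
            (Coalgebra.counit (R := k) (ra.right i) * Coalgebra.counit (R := k) (rb.right i')) •
              (S (rb.left i') * S (ra.left i)) := by
          refine Finset.sum_congr rfl fun i' _ => ?_
          rw [Finset.sum_comm]
          refine Finset.sum_congr rfl fun i _ => ?_
          simp only [← Finset.mul_sum]
          rw [Finset.sum_comm]
          rw [sum_mul_antipode_product (ra2 i) (rb2 i'), mul_algebraMap_eq_smul]
      _ = (∑ i' ∈ rb.index, Coalgebra.counit (R := k) (rb.right i') • S (rb.left i')) *
          (∑ i ∈ ra.index, Coalgebra.counit (R := k) (ra.right i) • S (ra.left i)) := by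
          rw [Finset.sum_mul_sum]
          refine Finset.sum_congr rfl fun i' _ => Finset.sum_congr rfl fun i _ => ?_
          rw [smul_mul_smul_comm, mul_comm (Coalgebra.counit (R := k) (rb.right i'))]
      _ = S b * S a := by
          rw [sum_counit_smul_antipode_left, sum_counit_smul_antipode_left]
  have hL : Lam ((∑ i ∈ ra.index, ∑ j ∈ (ra1 i).index,
        (ra1 i).left j ⊗ₜ[k] ((ra1 i).right j ⊗ₜ[k] ra.right i)) ⊗ₜ[k]
      (∑ i ∈ rb.index, ∑ j ∈ (rb1 i).index,
        (rb1 i).left j ⊗ₜ[k] ((rb1 i).right j ⊗ₜ[k] rb.right i)))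
      = S (a * b) := by
    simp only [sum_tmul, tmul_sum, map_sum, Lam_tmul]
    calc
      _ = ∑ i' ∈ rb.index, ∑ i ∈ ra.index,
            (Coalgebra.counit (R := k) (ra.left i) * Coalgebra.counit (R := k) (rb.left i')) •
              S (ra.right i * rb.right i') := by
          refine Finset.sum_congr rfl fun i' _ => ?_
          rw [Finset.sum_comm]
          refine Finset.sum_congr rfl fun i _ => ?_
          simp only [mul_assoc]
          calc
            _ = ∑ j' ∈ (rb1 i').index, S ((rb1 i').left j') *
                  (Coalgebra.counit (R := k) (ra.left i) •
                    ((rb1 i').right j' * S (ra.right i * rb.right i'))) := by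
                refine Finset.sum_congr rfl fun j' _ => ?_
                rw [← Finset.mul_sum, sum_antipode_mul_assoc (ra1 i)]
            _ = Coalgebra.counit (R := k) (ra.left i) •
                  ∑ j' ∈ (rb1 i').index, S ((rb1 i').left j') *
                    ((rb1 i').right j' * S (ra.right i * rb.right i')) := by
                rw [Finset.smul_sum]
                exact Finset.sum_congr rfl fun j' _ => mul_smul_comm _ _ _
            _ = _ := by
                rw [sum_antipode_mul_assoc (rb1 i'), smul_smul]
      _ = S (a * b) := by
          have hab : a * b = (∑ i ∈ ra.index, Coalgebra.counit (R := k) (ra.left i) • ra.right i) *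
              (∑ i' ∈ rb.index, Coalgebra.counit (R := k) (rb.left i') • rb.right i') := by
            rw [sum_counit_smul_right, sum_counit_smul_right]
          rw [hab, Finset.sum_mul_sum, map_sum, Finset.sum_comm]
          refine Finset.sum_congr rfl fun i' _ => ?_
          rw [map_sum]
          refine Finset.sum_congr rfl fun i _ => ?_
          rw [smul_mul_smul_comm, map_smul]
  rw [← hL, key, hR]

theorem antipode_one : S (1 : H) = 1 := by
  have := HopfAlgebra.mul_antipode_rTensor_comul_apply (R := k) (1 : H)
  simpa [Bialgebra.comul_one, Algebra.TensorProduct.one_def] using this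

end HopfAux

end AuxAntipode

lemma adL_apply (a y : H) :
    adL k H a y = mulH k H (TensorProduct.map (LinearMap.mulRight k y) (aS k H)
      (Coalgebra.comul (R := k) a)) := by
  unfold adL adT
  simp only [LinearMap.comp_apply, TensorProduct.mk_apply, LinearMap.rTensor_tmul]
  generalize Coalgebra.comul (R := k) a = D
  induction D using TensorProduct.induction_on with
  | zero => simp only [zero_tmul, map_zero]
  | tmul p q => simp [mulH, mul_assoc]
  | add u v hu hv => simp only [map_add, add_tmul, hu, hv]

/-- Alternative expression for the transmuted comultiplication:
`Δ̲(x) = Σᵢ Σ (βᵢ ▷ x₍₂₎) ⊗ αᵢ x₍₁₎`. -/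
theorem DeltaB_eq_alt
    (α β : ι → H) (R' : H ⊗[k] H)
    (hinv : (∑ i, α i ⊗ₜ[k] β i) * R' = 1 ∧ R' * (∑ i, α i ⊗ₜ[k] β i) = 1)
    (hqt1 : ∀ x : H, (∑ i, α i ⊗ₜ[k] β i) * Coalgebra.comul (R := k) x * R'
        = TensorProduct.comm k H H (Coalgebra.comul (R := k) x))
    (hqt2 : LinearMap.rTensor H (Coalgebra.comul (R := k)) (∑ i, α i ⊗ₜ[k] β i)
        = (∑ i, (α i ⊗ₜ[k] (1 : H)) ⊗ₜ[k] β i) * (∑ i, ((1 : H) ⊗ₜ[k] α i) ⊗ₜ[k] β i))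
    (hqt3 : LinearMap.lTensor H (Coalgebra.comul (R := k)) (∑ i, α i ⊗ₜ[k] β i)
        = (∑ i, α i ⊗ₜ[k] ((1 : H) ⊗ₜ[k] β i)) * (∑ i, α i ⊗ₜ[k] (β i ⊗ₜ[k] (1 : H))))
    (x : H) :
    DeltaB k H α β x
      = ∑ i, TensorProduct.map (adL k H (β i)) (LinearMap.mulLeft k (α i))
          (TensorProduct.comm k H H (Coalgebra.comul (R := k) x)) := by
  classical
  obtain ⟨hinv1, hinv2⟩ := hinv
  -- notation
  have hqt2' : LinearMap.rTensor H (Coalgebra.comul (R := k)) (∑ i, α i ⊗ₜ[k] β i)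
      = ∑ i, ∑ j, (α i ⊗ₜ[k] α j) ⊗ₜ[k] (β i * β j) := by
    rw [hqt2, Finset.sum_mul_sum]
    simp [Algebra.TensorProduct.tmul_mul_tmul]
  have hqt3' : LinearMap.lTensor H (Coalgebra.comul (R := k)) (∑ i, α i ⊗ₜ[k] β i)
      = ∑ i, ∑ j, (α i * α j) ⊗ₜ[k] (β j ⊗ₜ[k] β i) := by
    rw [hqt3, Finset.sum_mul_sum]
    simp [Algebra.TensorProduct.tmul_mul_tmul]
  set ρ1 : H ⊗[k] H →ₗ[k] H :=
    (TensorProduct.lid k H).toLinearMap ∘ₗ LinearMap.rTensor H (Coalgebra.counit (R := k))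
    with hρ1
  set ρ2 : H ⊗[k] H →ₗ[k] H :=
    (TensorProduct.rid k H).toLinearMap ∘ₗ LinearMap.lTensor H (Coalgebra.counit (R := k))
    with hρ2
  have hρ1t : ∀ (p q : H), ρ1 (p ⊗ₜ[k] q) = Coalgebra.counit (R := k) p • q := by
    intro p q; simp [hρ1]
  have hρ2t : ∀ (p q : H), ρ2 (p ⊗ₜ[k] q) = Coalgebra.counit (R := k) q • p := by
    intro p q; simp [hρ2]
  have hρ1c : ∀ (a : H), ρ1 (Coalgebra.comul (R := k) a) = a := by
    intro a; simp [hρ1]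
  -- (ε ⊗ id) R = 1 :  1 ⊗ u = 1
  have hu : ((1:H) ⊗ₜ[k] (∑ i, Coalgebra.counit (R := k) (α i) • β i)) = (1 : H ⊗[k] H) := by
    have h := congrArg (TensorProduct.map ρ1 LinearMap.id) hqt2'
    simp only [map_sum, LinearMap.rTensor_tmul, TensorProduct.map_tmul, LinearMap.id_coe,
      id_eq] at h
    simp only [hρ1c, hρ1t] at h
    have h2 : ((1:H) ⊗ₜ[k] (∑ i, Coalgebra.counit (R := k) (α i) • β i)) *
        (∑ i, α i ⊗ₜ[k] β i) = (∑ i, α i ⊗ₜ[k] β i) := by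
      conv_rhs => rw [h]
      rw [Finset.mul_sum]
      rw [Finset.sum_comm]
      refine Finset.sum_congr rfl fun j _ => ?_
      rw [Algebra.TensorProduct.tmul_mul_tmul, one_mul, Finset.sum_mul, tmul_sum]
      refine Finset.sum_congr rfl fun i _ => ?_
      rw [smul_mul_assoc, tmul_smul, smul_tmul']
    calc ((1:H) ⊗ₜ[k] (∑ i, Coalgebra.counit (R := k) (α i) • β i))
        = ((1:H) ⊗ₜ[k] (∑ i, Coalgebra.counit (R := k) (α i) • β i)) *
            ((∑ i, α i ⊗ₜ[k] β i) * R') := by rw [hinv1, mul_one]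
      _ = (((1:H) ⊗ₜ[k] (∑ i, Coalgebra.counit (R := k) (α i) • β i)) *
            (∑ i, α i ⊗ₜ[k] β i)) * R' := by rw [mul_assoc]
      _ = (∑ i, α i ⊗ₜ[k] β i) * R' := by rw [h2]
      _ = 1 := hinv1
  -- (id ⊗ ε) R = 1 :  v = 1
  have hv : (∑ i, Coalgebra.counit (R := k) (β i) • α i) = (1 : H) := by
    have h := congrArg (LinearMap.lTensor H ρ1) hqt3'
    simp only [map_sum, LinearMap.lTensor_tmul] at h
    simp only [hρ1c, hρ1t] at h
    have h2 : (∑ i, α i ⊗ₜ[k] β i) *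
        ((∑ i, Coalgebra.counit (R := k) (β i) • α i) ⊗ₜ[k] (1:H))
        = (∑ i, α i ⊗ₜ[k] β i) := by
      conv_rhs => rw [h]
      rw [Finset.sum_mul]
      refine Finset.sum_congr rfl fun i _ => ?_
      rw [Algebra.TensorProduct.tmul_mul_tmul, mul_one, Finset.mul_sum, sum_tmul]
      refine Finset.sum_congr rfl fun j _ => ?_
      rw [mul_smul_comm, smul_tmul]
    have h3 : ((∑ i, Coalgebra.counit (R := k) (β i) • α i) ⊗ₜ[k] (1:H))
        = (1 : H ⊗[k] H) := by
      calc ((∑ i, Coalgebra.counit (R := k) (β i) • α i) ⊗ₜ[k] (1:H))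
          = (R' * (∑ i, α i ⊗ₜ[k] β i)) *
              ((∑ i, Coalgebra.counit (R := k) (β i) • α i) ⊗ₜ[k] (1:H)) := by
            rw [hinv2, one_mul]
        _ = R' * ((∑ i, α i ⊗ₜ[k] β i) *
              ((∑ i, Coalgebra.counit (R := k) (β i) • α i) ⊗ₜ[k] (1:H))) := by
            rw [mul_assoc]
        _ = R' * (∑ i, α i ⊗ₜ[k] β i) := by rw [h2]
        _ = 1 := hinv2
    rw [Algebra.TensorProduct.one_def] at h3
    have h4 := congrArg ρ2 h3
    simp only [hρ2t, Bialgebra.counit_one, one_smul] at h4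
    exact h4
  -- (S ⊗ id) R is a left inverse of R, hence equals R'
  have hRl : (∑ i, aS k H (α i) ⊗ₜ[k] β i) * (∑ i, α i ⊗ₜ[k] β i) = 1 := by
    have h := congrArg (TensorProduct.map
      (LinearMap.mul' k H ∘ₗ LinearMap.rTensor H (HopfAlgebra.antipode (R := k)))
      (LinearMap.id (R := k) (M := H))) hqt2'
    simp only [map_sum, LinearMap.rTensor_tmul, TensorProduct.map_tmul, LinearMap.id_coe,
      id_eq, LinearMap.comp_apply, HopfAlgebra.mul_antipode_rTensor_comul_apply,
      LinearMap.mul'_apply] at h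
    -- h : Σᵢ algebraMap (ε αᵢ) ⊗ βᵢ = Σᵢⱼ (S αᵢ * αⱼ) ⊗ (βᵢ * βⱼ)
    have hL : (∑ i, (algebraMap k H (Coalgebra.counit (R := k) (α i))) ⊗ₜ[k] β i)
        = (1 : H ⊗[k] H) := by
      rw [← hu, tmul_sum]
      refine Finset.sum_congr rfl fun i _ => ?_
      rw [Algebra.algebraMap_eq_smul_one, smul_tmul]
    rw [hL] at h
    rw [Finset.sum_mul_sum]
    simp only [Algebra.TensorProduct.tmul_mul_tmul]
    exact h.symm ▸ h.symm
  have hR'eq : R' = ∑ i, aS k H (α i) ⊗ₜ[k] β i := by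
    calc R' = 1 * R' := (one_mul _).symm
      _ = ((∑ i, aS k H (α i) ⊗ₜ[k] β i) * (∑ i, α i ⊗ₜ[k] β i)) * R' := by rw [hRl]
      _ = (∑ i, aS k H (α i) ⊗ₜ[k] β i) * ((∑ i, α i ⊗ₜ[k] β i) * R') := by rw [mul_assoc]
      _ = ∑ i, aS k H (α i) ⊗ₜ[k] β i := by rw [hinv1, mul_one]
  -- (S ⊗ S) R = R
  have hSS : (∑ i, aS k H (α i) ⊗ₜ[k] aS k H (β i)) = ∑ i, α i ⊗ₜ[k] β i := by
    have h := congrArg (TensorProduct.map (HopfAlgebra.antipode (R := k))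
      (LinearMap.mul' k H ∘ₗ LinearMap.lTensor H (HopfAlgebra.antipode (R := k)))) hqt3'
    simp only [map_sum, LinearMap.lTensor_tmul, TensorProduct.map_tmul,
      LinearMap.comp_apply, HopfAlgebra.mul_antipode_lTensor_comul_apply,
      LinearMap.mul'_apply] at h
    -- h : Σᵢ S αᵢ ⊗ algebraMap (ε βᵢ) = Σᵢⱼ S(αᵢ αⱼ) ⊗ (βⱼ * S βᵢ)
    have hL : (∑ i, (HopfAlgebra.antipode (R := k) (α i)) ⊗ₜ[k]
        (algebraMap k H (Coalgebra.counit (R := k) (β i)))) = (1 : H ⊗[k] H) := by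
      have : (∑ i, (HopfAlgebra.antipode (R := k) (α i)) ⊗ₜ[k]
          (algebraMap k H (Coalgebra.counit (R := k) (β i))))
          = (HopfAlgebra.antipode (R := k)
              (∑ i, Coalgebra.counit (R := k) (β i) • α i)) ⊗ₜ[k] (1:H) := by
        rw [map_sum, sum_tmul]
        refine Finset.sum_congr rfl fun i _ => ?_
        rw [Algebra.algebraMap_eq_smul_one, tmul_smul, map_smul, smul_tmul']
      rw [this, hv, HopfAux.antipode_one, Algebra.TensorProduct.one_def]
    rw [hL] at h
    have h2 : (1 : H ⊗[k] H) = (∑ i, aS k H (α i) ⊗ₜ[k] β i) *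
        (∑ i, aS k H (α i) ⊗ₜ[k] aS k H (β i)) := by
      have h' : (1 : H ⊗[k] H) = ∑ a, ∑ b, HopfAlgebra.antipode (R := k) (α b * α a) ⊗ₜ[k]
          (β a * HopfAlgebra.antipode (R := k) (β b)) := h.trans Finset.sum_comm
      rw [Finset.sum_mul_sum, h']
      refine Finset.sum_congr rfl fun i _ => Finset.sum_congr rfl fun j _ => ?_
      rw [Algebra.TensorProduct.tmul_mul_tmul, HopfAux.antipode_mul]
      simp only [aS]
    calc (∑ i, aS k H (α i) ⊗ₜ[k] aS k H (β i))
        = ((∑ i, α i ⊗ₜ[k] β i) * R') *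
            (∑ i, aS k H (α i) ⊗ₜ[k] aS k H (β i)) := by rw [hinv1, one_mul]
      _ = (∑ i, α i ⊗ₜ[k] β i) * (R' *
            (∑ i, aS k H (α i) ⊗ₜ[k] aS k H (β i))) := by rw [mul_assoc]
      _ = (∑ i, α i ⊗ₜ[k] β i) * 1 := by rw [hR'eq, ← h2]
      _ = ∑ i, α i ⊗ₜ[k] β i := mul_one _
  -- exchange relation R Δx = τ(Δx) R
  have hex : (∑ i, α i ⊗ₜ[k] β i) * Coalgebra.comul (R := k) x
      = (TensorProduct.comm k H H (Coalgebra.comul (R := k) x)) * (∑ i, α i ⊗ₜ[k] β i) := by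
    calc (∑ i, α i ⊗ₜ[k] β i) * Coalgebra.comul (R := k) x
        = (∑ i, α i ⊗ₜ[k] β i) * Coalgebra.comul (R := k) x *
            (R' * (∑ i, α i ⊗ₜ[k] β i)) := by rw [hinv2, mul_one]
      _ = ((∑ i, α i ⊗ₜ[k] β i) * Coalgebra.comul (R := k) x * R') *
            (∑ i, α i ⊗ₜ[k] β i) := by rw [← mul_assoc]
      _ = _ := by rw [hqt1 x]
  obtain ⟨s, hs⟩ := TensorProduct.exists_finset (R := k) (Coalgebra.comul (R := k) x)
  -- expanded exchange relation
  have hexE : ∑ p ∈ s, ∑ j, (β j * p.2) ⊗ₜ[k] (α j * p.1)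
      = ∑ p ∈ s, ∑ j, (p.1 * β j) ⊗ₜ[k] (p.2 * α j) := by
    have h := congrArg (TensorProduct.comm k H H) hex
    rw [hs] at h
    simp only [Finset.sum_mul_sum, map_sum, Algebra.TensorProduct.tmul_mul_tmul,
      TensorProduct.comm_tmul] at h
    rw [Finset.sum_comm] at h
    exact h
  -- (S ⊗ S) R = R, multiplied into a fixed tensor
  have hA : ∀ p : H × H, (∑ j, (p.1 * aS k H (β j)) ⊗ₜ[k] (p.2 * aS k H (α j)))
      = ∑ j, (p.1 * β j) ⊗ₜ[k] (p.2 * α j) := by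
    intro p
    have h := congrArg (TensorProduct.map (LinearMap.mulLeft k p.1) (LinearMap.mulLeft k p.2)
      ∘ₗ (TensorProduct.comm k H H).toLinearMap) hSS
    simpa [map_sum, TensorProduct.comm_tmul, TensorProduct.map_tmul] using h
  -- left chain
  have chainL : DeltaB k H α β x
      = ∑ i, TensorProduct.map (LinearMap.mulRight k (aS k H (β i))) (LinearMap.mulLeft k (α i))
          (∑ p ∈ s, ∑ j, (p.1 * aS k H (β j)) ⊗ₜ[k] (p.2 * aS k H (α j))) := by
    calc DeltaB k H α β x
        = ∑ p ∈ s, ((TensorProduct.comm k H H).toLinearMap ∘ₗ TensorProduct.map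
            (mulH k H ∘ₗ TensorProduct.map (LinearMap.mulRight k p.2) (aS k H))
            (LinearMap.mulLeft k p.1 ∘ₗ aS k H))
            (LinearMap.rTensor H (Coalgebra.comul (R := k)) (∑ i, α i ⊗ₜ[k] β i)) := by
          rw [DeltaB]
          simp only [LinearMap.sum_apply, LinearMap.comp_apply, hs, map_sum,
            TensorProduct.map_tmul, LinearMap.mulRight_apply, LinearMap.rTensor_tmul,
            TensorProduct.comm_tmul, LinearMap.mulLeft_apply]
          rw [Finset.sum_comm]
          refine Finset.sum_congr rfl fun p _ => Finset.sum_congr rfl fun i _ => ?_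
          rw [adL_apply]
          simp only [LinearEquiv.coe_coe, TensorProduct.comm_tmul]
      _ = ∑ p ∈ s, ((TensorProduct.comm k H H).toLinearMap ∘ₗ TensorProduct.map
            (mulH k H ∘ₗ TensorProduct.map (LinearMap.mulRight k p.2) (aS k H))
            (LinearMap.mulLeft k p.1 ∘ₗ aS k H))
            (∑ i, ∑ j, (α i ⊗ₜ[k] α j) ⊗ₜ[k] (β i * β j)) := by rw [hqt2']
      _ = _ := by
          simp only [map_sum, LinearMap.comp_apply, LinearEquiv.coe_coe,
            TensorProduct.map_tmul, LinearMap.mulRight_apply, LinearMap.mulLeft_apply,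
            TensorProduct.comm_tmul, mulH, LinearMap.mul'_apply]
          rw [Finset.sum_comm]
          refine Finset.sum_congr rfl fun i _ => Finset.sum_congr rfl fun p _ =>
            Finset.sum_congr rfl fun j _ => ?_
          have : aS k H (β i * β j) = aS k H (β j) * aS k H (β i) := HopfAux.antipode_mul _ _
          rw [this]
          simp only [mul_assoc]
  -- right chain
  have chainR : (∑ i, TensorProduct.map (adL k H (β i)) (LinearMap.mulLeft k (α i))
        (TensorProduct.comm k H H (Coalgebra.comul (R := k) x)))
      = ∑ i, TensorProduct.map (LinearMap.mulRight k (aS k H (β i))) (LinearMap.mulLeft k (α i))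
          (∑ p ∈ s, ∑ j, (β j * p.2) ⊗ₜ[k] (α j * p.1)) := by
    calc (∑ i, TensorProduct.map (adL k H (β i)) (LinearMap.mulLeft k (α i))
        (TensorProduct.comm k H H (Coalgebra.comul (R := k) x)))
        = ∑ p ∈ s, ((TensorProduct.comm k H H).toLinearMap ∘ₗ TensorProduct.map
            (LinearMap.mulRight k p.1)
            (mulH k H ∘ₗ TensorProduct.map (LinearMap.mulRight k p.2) (aS k H)))
            (LinearMap.lTensor H (Coalgebra.comul (R := k)) (∑ i, α i ⊗ₜ[k] β i)) := by
          simp only [hs, map_sum, TensorProduct.comm_tmul, TensorProduct.map_tmul,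
            LinearMap.mulLeft_apply, LinearMap.mulRight_apply, LinearMap.comp_apply,
            LinearMap.lTensor_tmul]
          rw [Finset.sum_comm]
          refine Finset.sum_congr rfl fun p _ => Finset.sum_congr rfl fun i _ => ?_
          rw [adL_apply]
          simp only [LinearEquiv.coe_coe, TensorProduct.comm_tmul]
      _ = ∑ p ∈ s, ((TensorProduct.comm k H H).toLinearMap ∘ₗ TensorProduct.map
            (LinearMap.mulRight k p.1)
            (mulH k H ∘ₗ TensorProduct.map (LinearMap.mulRight k p.2) (aS k H)))
            (∑ i, ∑ j, (α i * α j) ⊗ₜ[k] (β j ⊗ₜ[k] β i)) := by rw [hqt3']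
      _ = _ := by
          simp only [map_sum, LinearMap.comp_apply, LinearEquiv.coe_coe,
            TensorProduct.map_tmul, LinearMap.mulRight_apply, LinearMap.mulLeft_apply,
            TensorProduct.comm_tmul, mulH, LinearMap.mul'_apply]
          rw [Finset.sum_comm]
          refine Finset.sum_congr rfl fun i _ => Finset.sum_congr rfl fun p _ =>
            Finset.sum_congr rfl fun j _ => ?_
          simp only [mul_assoc]
  rw [chainL, chainR]
  refine Finset.sum_congr rfl fun i _ => ?_
  congr 1
  rw [Finset.sum_congr rfl fun p _ => hA p, ← hexE]
end

section
/- For every x ∈ H, writing c₊ = Σⱼ c′ⱼ ⊗ c″ⱼ, one has Σⱼ Σ (x₍₁₎ ▷ c′ⱼ) ⊗ (x₍₂₎ ▷ c″ⱼ) = ε(x)·c₊, and likewise with c₋ in place of c₊. Equivalently, c₊ and c₋ are invariant under the action of H on H ⊗ H given by x · (a ⊗ b) = Σ (x₍₁₎ ▷ a) ⊗ (x₍₂₎ ▷ b), so each defines a homomorphism of left H-modules k → H ⊗ H. -/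
open scoped TensorProduct
open TensorProduct

variable (k : Type*) [CommRing k] (H : Type*) [Ring H] [HopfAlgebra k H]

variable {ι : Type*} [Fintype ι]

set_option synthInstance.maxHeartbeats 1000000
set_option maxHeartbeats 1000000

open Coalgebra

lemma sum_counit_smul (a : H) (r : Coalgebra.Repr k a (H × H)) :
    ∑ i ∈ r.index, Coalgebra.counit (R := k) (r.left i) • r.right i = a := by
  have h := Coalgebra.sum_counit_tmul_eq r
  apply_fun (TensorProduct.lid k H) at h
  rw [map_sum] at h
  simp only [lid_tmul, one_smul] at h
  exact h

lemma sum_smul_counit (a : H) (r : Coalgebra.Repr k a (H × H)) :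
    ∑ i ∈ r.index, Coalgebra.counit (R := k) (r.right i) • r.left i = a := by
  have h := Coalgebra.sum_tmul_counit_eq r
  apply_fun (TensorProduct.rid k H) at h
  rw [map_sum] at h
  simp only [rid_tmul, one_smul] at h
  exact h

lemma sum_aS_mul_eq {a : H} (r : Coalgebra.Repr k a (H × H)) :
    ∑ i ∈ r.index, aS k H (r.left i) * r.right i
      = algebraMap k H (Coalgebra.counit (R := k) a) :=
  HopfAlgebra.sum_antipode_mul_eq_algebraMap_counit r

lemma sum_mul_aS_eq {a : H} (r : Coalgebra.Repr k a (H × H)) :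
    ∑ i ∈ r.index, r.left i * aS k H (r.right i)
      = algebraMap k H (Coalgebra.counit (R := k) a) :=
  HopfAlgebra.sum_mul_antipode_eq_algebraMap_counit r

lemma aS_mul (a b : H) : aS k H (a * b) = aS k H b * aS k H a := by
  let ra := ℛ k a
  let rb := ℛ k b
  let ca : ∀ i, Coalgebra.Repr k (ra.left i) (H × H) := fun i => ℛ k (ra.left i)
  let cb : ∀ j, Coalgebra.Repr k (rb.left j) (H × H) := fun j => ℛ k (rb.left j)
  let ca' : ∀ i, Coalgebra.Repr k (ra.right i) (H × H) := fun i => ℛ k (ra.right i)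
  let cb' : ∀ j, Coalgebra.Repr k (rb.right j) (H × H) := fun j => ℛ k (rb.right j)
  set S := aS k H with hS
  set ε : H →ₗ[k] k := Coalgebra.counit (R := k) with hε
  -- the middle element
  set W : H := ∑ i ∈ ra.index, ∑ j ∈ rb.index,
      algebraMap k H (ε (ra.left i * rb.left j)) * (S (rb.right j) * S (ra.right i)) with hW
  -- way 1 : W = S b * S a
  have way1 : W = S b * S a := by
    have hb := sum_counit_smul k H b rb
    have ha := sum_counit_smul k H a ra
    calc W = ∑ i ∈ ra.index, ∑ j ∈ rb.index,
        (ε (rb.left j) • S (rb.right j)) * (ε (ra.left i) • S (ra.right i)) := by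
          refine Finset.sum_congr rfl fun i _ => Finset.sum_congr rfl fun j _ => ?_
          rw [smul_mul_smul_comm, ← Algebra.smul_def, Bialgebra.counit_mul, mul_comm]
      _ = ∑ i ∈ ra.index, (∑ j ∈ rb.index, ε (rb.left j) • S (rb.right j)) *
            (ε (ra.left i) • S (ra.right i)) := by
          refine Finset.sum_congr rfl fun i _ => ?_; rw [Finset.sum_mul]
      _ = (∑ j ∈ rb.index, ε (rb.left j) • S (rb.right j)) *
            (∑ i ∈ ra.index, ε (ra.left i) • S (ra.right i)) := by rw [Finset.mul_sum]
      _ = S (∑ j ∈ rb.index, Coalgebra.counit (R := k) (rb.left j) • rb.right j) *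
            S (∑ i ∈ ra.index, Coalgebra.counit (R := k) (ra.left i) • ra.right i) := by
          simp_rw [map_sum, map_smul]; rfl
      _ = S b * S a := by rw [hb, ha]
  -- way 2 : W = S (a * b)
  have step2 : W = ∑ i ∈ ra.index, ∑ j ∈ rb.index, ∑ m ∈ (ca i).index, ∑ n ∈ (cb j).index,
      S ((ca i).left m * (cb j).left n) * ((ca i).right m * (cb j).right n) *
        (S (rb.right j) * S (ra.right i)) := by
    refine Finset.sum_congr rfl fun i _ => Finset.sum_congr rfl fun j _ => ?_
    have hcm : Coalgebra.comul (R := k) (ra.left i * rb.left j)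
        = ∑ m ∈ (ca i).index, ∑ n ∈ (cb j).index,
            ((ca i).left m * (cb j).left n) ⊗ₜ[k] ((ca i).right m * (cb j).right n) := by
      rw [Bialgebra.comul_mul, ← (ca i).eq, ← (cb j).eq, Finset.sum_mul_sum]
      simp [Algebra.TensorProduct.tmul_mul_tmul]
    have h0 := HopfAlgebra.mul_antipode_rTensor_comul_apply (R := k)
      (a := ra.left i * rb.left j)
    rw [hcm] at h0
    simp only [map_sum, LinearMap.rTensor_tmul, LinearMap.mul'_apply,
      show HopfAlgebra.antipode (R := k) (A := H) = S from rfl] at h0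
    rw [← h0, Finset.sum_mul]
    exact Finset.sum_congr rfl fun m _ => by rw [Finset.sum_mul]
  have collapse_b : ∀ i, ∀ m,
      (∑ j ∈ rb.index, ∑ n ∈ (cb j).index,
        S ((ca i).left m * (cb j).left n) * ((ca i).right m * (cb j).right n) *
          (S (rb.right j) * S (ra.right i)))
      = S ((ca i).left m * b) * ((ca i).right m * S (ra.right i)) := by
    intro i m
    have hb := Coalgebra.sum_tmul_tmul_eq rb cb cb'
    apply_fun (LinearMap.mulRight k (S (ra.right i)) ∘ₗ mulH k H ∘ₗ
      TensorProduct.map (S ∘ₗ LinearMap.mulLeft k ((ca i).left m))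
        (LinearMap.mulLeft k ((ca i).right m) ∘ₗ mulH k H ∘ₗ LinearMap.lTensor H S)) at hb
    simp only [map_sum, LinearMap.comp_apply, TensorProduct.map_tmul, LinearMap.lTensor_tmul,
      mulH, LinearMap.mul'_apply, LinearMap.mulLeft_apply, LinearMap.mulRight_apply] at hb
    have h1 : (∑ j ∈ rb.index, ∑ n ∈ (cb j).index,
        S ((ca i).left m * (cb j).left n) * ((ca i).right m * (cb j).right n) *
          (S (rb.right j) * S (ra.right i)))
        = ∑ j ∈ rb.index, ∑ n ∈ (cb j).index,
          S ((ca i).left m * (cb j).left n) *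
            ((ca i).right m * ((cb j).right n * S (rb.right j))) * S (ra.right i) :=
      Finset.sum_congr rfl fun j _ => Finset.sum_congr rfl fun n _ => by
        simp only [mul_assoc]
    rw [h1, hb]
    calc ∑ j ∈ rb.index, ∑ p ∈ (cb' j).index,
          S ((ca i).left m * rb.left j) *
            ((ca i).right m * ((cb' j).left p * S ((cb' j).right p))) * S (ra.right i)
        = ∑ j ∈ rb.index, Coalgebra.counit (R := k) (rb.right j) •
            (S ((ca i).left m * rb.left j) * ((ca i).right m * S (ra.right i))) := by
          refine Finset.sum_congr rfl fun j _ => ?_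
          rw [← Finset.sum_mul, ← Finset.mul_sum, ← Finset.mul_sum, sum_mul_aS_eq k H (cb' j)]
          simp only [Algebra.smul_def, Algebra.commutes, mul_assoc]
      _ = S ((ca i).left m * b) * ((ca i).right m * S (ra.right i)) := by
          conv_rhs => rw [← sum_smul_counit k H b rb]
          rw [Finset.mul_sum]
          simp_rw [mul_smul_comm, map_sum, map_smul, Finset.sum_mul, smul_mul_assoc]
  have step5 : W = ∑ i ∈ ra.index, ∑ m ∈ (ca i).index,
      S ((ca i).left m * b) * ((ca i).right m * S (ra.right i)) := by
    rw [step2]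
    refine Finset.sum_congr rfl fun i _ => ?_
    rw [Finset.sum_comm]
    exact Finset.sum_congr rfl fun m _ => collapse_b i m
  have way2 : W = S (a * b) := by
    rw [step5]
    have ha2 := Coalgebra.sum_tmul_tmul_eq ra ca ca'
    apply_fun (mulH k H ∘ₗ TensorProduct.map (S ∘ₗ LinearMap.mulRight k b)
      (mulH k H ∘ₗ LinearMap.lTensor H S)) at ha2
    simp only [map_sum, LinearMap.comp_apply, TensorProduct.map_tmul, LinearMap.lTensor_tmul,
      mulH, LinearMap.mul'_apply, LinearMap.mulRight_apply] at ha2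
    rw [ha2]
    calc ∑ i ∈ ra.index, ∑ p ∈ (ca' i).index,
          S (ra.left i * b) * ((ca' i).left p * S ((ca' i).right p))
        = ∑ i ∈ ra.index, Coalgebra.counit (R := k) (ra.right i) • S (ra.left i * b) := by
          refine Finset.sum_congr rfl fun i _ => ?_
          rw [← Finset.mul_sum, sum_mul_aS_eq k H (ca' i), ← Algebra.commutes, ← Algebra.smul_def]
      _ = S (a * b) := by
          conv_rhs => rw [← sum_smul_counit k H a ra]
          rw [Finset.sum_mul]
          simp_rw [smul_mul_assoc, map_sum, map_smul]
  rw [← way2, way1]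

lemma adT_tmul (x y : H) (r : Coalgebra.Repr k x (H × H)) :
    adT k H (x ⊗ₜ[k] y) = ∑ i ∈ r.index, r.left i * y * aS k H (r.right i) := by
  simp only [adT, LinearMap.comp_apply, LinearEquiv.coe_coe, LinearMap.rTensor_tmul]
  rw [← r.eq]
  simp [sum_tmul, mulH, mul_assoc]


/-- `((a⊗b)⊗(c⊗d)) ↦ a⊗((b⊗c)⊗d)`. -/
noncomputable def nuMap : (H ⊗[k] H) ⊗[k] (H ⊗[k] H) →ₗ[k] H ⊗[k] ((H ⊗[k] H) ⊗[k] H) :=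
  LinearMap.lTensor H (TensorProduct.assoc k H H H).symm.toLinearMap ∘ₗ
    (TensorProduct.assoc k H H (H ⊗[k] H)).toLinearMap

@[simp] lemma nuMap_tmul (a b c d : H) :
    nuMap k H ((a ⊗ₜ[k] b) ⊗ₜ[k] (c ⊗ₜ[k] d)) = a ⊗ₜ[k] ((b ⊗ₜ[k] c) ⊗ₜ[k] d) := by
  simp [nuMap]

/-- `u⊗((v⊗w)⊗z) ↦ (u * S v) ⊗ (w * S z)`. -/
noncomputable def psiMap : H ⊗[k] ((H ⊗[k] H) ⊗[k] H) →ₗ[k] H ⊗[k] H :=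
  TensorProduct.map (mulH k H ∘ₗ LinearMap.lTensor H (aS k H))
      (mulH k H ∘ₗ LinearMap.lTensor H (aS k H)) ∘ₗ
    (TensorProduct.assoc k H H (H ⊗[k] H)).symm.toLinearMap ∘ₗ
    LinearMap.lTensor H (TensorProduct.assoc k H H H).toLinearMap

@[simp] lemma psiMap_tmul (u v w z : H) :
    psiMap k H (u ⊗ₜ[k] ((v ⊗ₜ[k] w) ⊗ₜ[k] z)) = (u * aS k H v) ⊗ₜ[k] (w * aS k H z) := by
  simp [psiMap, mulH]

lemma coassoc4 (x : H) :
    nuMap k H (TensorProduct.map (Coalgebra.comul (R := k)) (Coalgebra.comul (R := k))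
        (Coalgebra.comul (R := k) x))
      = LinearMap.lTensor H (LinearMap.rTensor H (Coalgebra.comul (R := k)))
          (LinearMap.lTensor H (Coalgebra.comul (R := k)) (Coalgebra.comul (R := k) x)) := by
  have hmap : TensorProduct.map (Coalgebra.comul (R := k) (A := H)) (Coalgebra.comul (R := k))
      = LinearMap.lTensor (H ⊗[k] H) (Coalgebra.comul (R := k)) ∘ₗ
          LinearMap.rTensor H (Coalgebra.comul (R := k)) := by
    rw [LinearMap.lTensor_comp_rTensor]
  rw [hmap, LinearMap.comp_apply, Coalgebra.coassoc_symm_apply x |>.symm]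
  -- now : nuMap (lTensor (H⊗H) comul ((assoc).symm (lTensor H comul (comul x)))) = ...
  set w := LinearMap.lTensor H (Coalgebra.comul (R := k)) (Coalgebra.comul (R := k) x) with hw
  have M1 : ∀ u : H ⊗[k] (H ⊗[k] H),
      nuMap k H (LinearMap.lTensor (H ⊗[k] H) (Coalgebra.comul (R := k))
        ((TensorProduct.assoc k H H H).symm u))
      = LinearMap.lTensor H
          ((TensorProduct.assoc k H H H).symm.toLinearMap ∘ₗ
            LinearMap.lTensor H (Coalgebra.comul (R := k))) u := by
    intro u
    induction u using TensorProduct.induction_on with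
    | zero => simp
    | tmul a u' =>
      induction u' using TensorProduct.induction_on with
      | zero => simp
      | tmul b c => simp [nuMap]
      | add y z hy hz => simp only [tmul_add, map_add, hy, hz]
    | add y z hy hz => simp only [map_add, hy, hz]
  rw [M1]
  -- now reduce to second-leg identity
  obtain ⟨r⟩ : Nonempty (Coalgebra.Repr k x (H × H)) := ⟨ℛ k x⟩
  rw [hw, ← r.eq, map_sum, map_sum, map_sum]
  refine Finset.sum_congr rfl fun i _ => ?_
  simp only [LinearMap.lTensor_tmul, LinearMap.comp_apply, LinearEquiv.coe_coe]
  congr 1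
  exact Coalgebra.coassoc_symm_apply (r.right i)


lemma commH_mul (u v : H ⊗[k] H) :
    TensorProduct.comm k H H (u * v)
      = TensorProduct.comm k H H u * TensorProduct.comm k H H v := by
  induction u using TensorProduct.induction_on with
  | zero => simp
  | add u₁ u₂ h1 h2 => simp [add_mul, h1, h2]
  | tmul a b =>
    induction v using TensorProduct.induction_on with
    | zero => simp
    | add v₁ v₂ h1 h2 => simp [mul_add, h1, h2]
    | tmul c d => simp [Algebra.TensorProduct.tmul_mul_tmul]

lemma commH_comm (u : H ⊗[k] H) :
    TensorProduct.comm k H H (TensorProduct.comm k H H u) = u := by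
  induction u using TensorProduct.induction_on with
  | zero => simp
  | add u₁ u₂ h1 h2 => simp [h1, h2]
  | tmul a b => simp

lemma key_invariance (M : H ⊗[k] H)
    (hM : ∀ y : H, M * Coalgebra.comul (R := k) y = Coalgebra.comul (R := k) y * M) (x : H) :
    TensorProduct.map (adT k H) (adT k H)
        (TensorProduct.tensorTensorTensorComm k H H H H
          (Coalgebra.comul (R := k) x ⊗ₜ[k]
            TensorProduct.map (aS k H) (LinearMap.id : H →ₗ[k] H) M))
      = Coalgebra.counit (R := k) x •
          TensorProduct.map (aS k H) (LinearMap.id : H →ₗ[k] H) M := by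
  obtain ⟨s, hs⟩ := TensorProduct.exists_finset (R := k) M
  let r := ℛ k x
  let r₁ : ∀ i, Coalgebra.Repr k (r.left i) (H × H) := fun i => ℛ k (r.left i)
  let r₂ : ∀ i, Coalgebra.Repr k (r.right i) (H × H) := fun i => ℛ k (r.right i)
  -- Step 1 : expand the LHS completely
  have L1 : TensorProduct.map (adT k H) (adT k H)
        (TensorProduct.tensorTensorTensorComm k H H H H
          (Coalgebra.comul (R := k) x ⊗ₜ[k]
            TensorProduct.map (aS k H) (LinearMap.id : H →ₗ[k] H) M))
      = ∑ i ∈ r.index, ∑ j ∈ (r₁ i).index, ∑ l ∈ (r₂ i).index, ∑ p ∈ s,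
          ((r₁ i).left j * aS k H ((r₁ i).right j * p.1)) ⊗ₜ[k]
            ((r₂ i).left l * p.2 * aS k H ((r₂ i).right l)) := by
    rw [hs, ← r.eq]
    rw [map_sum, sum_tmul]
    rw [map_sum, map_sum]
    refine Finset.sum_congr rfl fun i _ => ?_
    rw [tmul_sum, map_sum, map_sum]
    -- now : Σ_p map adT adT (ttt ((x₁⊗x₂) ⊗ (S p.1 ⊗ p.2)))
    have : ∀ p : H × H,
        TensorProduct.map (adT k H) (adT k H)
          (TensorProduct.tensorTensorTensorComm k H H H H
            ((r.left i ⊗ₜ[k] r.right i) ⊗ₜ[k]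
              TensorProduct.map (aS k H) (LinearMap.id : H →ₗ[k] H) (p.1 ⊗ₜ[k] p.2)))
        = ∑ j ∈ (r₁ i).index, ∑ l ∈ (r₂ i).index,
            ((r₁ i).left j * aS k H ((r₁ i).right j * p.1)) ⊗ₜ[k]
              ((r₂ i).left l * p.2 * aS k H ((r₂ i).right l)) := by
      intro p
      rw [TensorProduct.map_tmul, tensorTensorTensorComm_tmul, TensorProduct.map_tmul,
        adT_tmul k H _ _ (r₁ i), adT_tmul k H _ _ (r₂ i), sum_tmul]
      refine Finset.sum_congr rfl fun j _ => ?_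
      rw [tmul_sum]
      refine Finset.sum_congr rfl fun l _ => ?_
      simp only [LinearMap.id_coe, id_eq]
      rw [aS_mul, ← mul_assoc]
    rw [Finset.sum_congr rfl fun p _ => this p]
    rw [Finset.sum_comm]
    exact Finset.sum_congr rfl fun j _ => Finset.sum_comm
  -- Step 2 : the same sum, as `psiMap ∘ (1 ⊗ ((·*M) ⊗ 1)) ∘ ν` of the fourfold comultiplication
  have E1 : psiMap k H (LinearMap.lTensor H (LinearMap.rTensor H (LinearMap.mulRight k M))
        (nuMap k H (TensorProduct.map (Coalgebra.comul (R := k)) (Coalgebra.comul (R := k))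
          (Coalgebra.comul (R := k) x))))
      = ∑ i ∈ r.index, ∑ j ∈ (r₁ i).index, ∑ l ∈ (r₂ i).index, ∑ p ∈ s,
          ((r₁ i).left j * aS k H ((r₁ i).right j * p.1)) ⊗ₜ[k]
            ((r₂ i).left l * p.2 * aS k H ((r₂ i).right l)) := by
    rw [← r.eq]
    simp only [map_sum]
    refine Finset.sum_congr rfl fun i _ => ?_
    rw [TensorProduct.map_tmul, ← (r₁ i).eq, ← (r₂ i).eq, sum_tmul]
    simp only [map_sum]
    refine Finset.sum_congr rfl fun j _ => ?_
    rw [tmul_sum]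
    simp only [map_sum]
    refine Finset.sum_congr rfl fun l _ => ?_
    rw [nuMap_tmul, LinearMap.lTensor_tmul, LinearMap.rTensor_tmul, LinearMap.mulRight_apply,
      hs, Finset.mul_sum]
    simp only [Algebra.TensorProduct.tmul_mul_tmul]
    rw [sum_tmul, tmul_sum]
    simp only [map_sum, psiMap_tmul]
  -- Step 3 : move `M` to the other side using `hM`
  have swap : LinearMap.lTensor H (LinearMap.rTensor H (LinearMap.mulRight k M))
        (nuMap k H (TensorProduct.map (Coalgebra.comul (R := k)) (Coalgebra.comul (R := k))
          (Coalgebra.comul (R := k) x)))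
      = LinearMap.lTensor H (LinearMap.rTensor H (LinearMap.mulLeft k M))
        (nuMap k H (TensorProduct.map (Coalgebra.comul (R := k)) (Coalgebra.comul (R := k))
          (Coalgebra.comul (R := k) x))) := by
    rw [coassoc4, ← LinearMap.comp_apply, ← LinearMap.lTensor_comp, ← LinearMap.rTensor_comp]
    rw [show LinearMap.mulRight k M ∘ₗ (Coalgebra.comul (R := k) (A := H))
        = LinearMap.mulLeft k M ∘ₗ (Coalgebra.comul (R := k) (A := H)) from
      LinearMap.ext fun y => by
        simp only [LinearMap.comp_apply, LinearMap.mulRight_apply, LinearMap.mulLeft_apply]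
        exact (hM y).symm]
    rw [LinearMap.rTensor_comp, LinearMap.lTensor_comp, LinearMap.comp_apply, ← coassoc4]
  -- Step 4 : collapse, using the antipode axioms
  have E2 : psiMap k H (LinearMap.lTensor H (LinearMap.rTensor H (LinearMap.mulLeft k M))
        (nuMap k H (TensorProduct.map (Coalgebra.comul (R := k)) (Coalgebra.comul (R := k))
          (Coalgebra.comul (R := k) x))))
      = Coalgebra.counit (R := k) x •
          TensorProduct.map (aS k H) (LinearMap.id : H →ₗ[k] H) M := by
    have expand : psiMap k H (LinearMap.lTensor H (LinearMap.rTensor H (LinearMap.mulLeft k M))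
        (nuMap k H (TensorProduct.map (Coalgebra.comul (R := k)) (Coalgebra.comul (R := k))
          (Coalgebra.comul (R := k) x))))
        = ∑ i ∈ r.index, ∑ p ∈ s, ∑ j ∈ (r₁ i).index, ∑ l ∈ (r₂ i).index,
            (((r₁ i).left j * aS k H ((r₁ i).right j)) * aS k H p.1) ⊗ₜ[k]
              (p.2 * ((r₂ i).left l * aS k H ((r₂ i).right l))) := by
      rw [← r.eq]
      simp only [map_sum]
      refine Finset.sum_congr rfl fun i _ => ?_
      rw [TensorProduct.map_tmul, ← (r₁ i).eq, ← (r₂ i).eq, sum_tmul]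
      simp only [map_sum]
      rw [Finset.sum_comm]
      refine Finset.sum_congr rfl fun j _ => ?_
      rw [tmul_sum]
      simp only [map_sum]
      rw [Finset.sum_comm]
      refine Finset.sum_congr rfl fun l _ => ?_
      rw [nuMap_tmul, LinearMap.lTensor_tmul, LinearMap.rTensor_tmul, LinearMap.mulLeft_apply,
        hs, Finset.sum_mul]
      simp only [Algebra.TensorProduct.tmul_mul_tmul]
      rw [sum_tmul, tmul_sum]
      simp only [map_sum, psiMap_tmul]
      refine Finset.sum_congr rfl fun p _ => ?_
      rw [aS_mul, ← mul_assoc, mul_assoc p.2]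
    rw [expand]
    -- collapse the `j` and `l` sums with the antipode axioms
    have hcol : ∀ i ∈ r.index, ∀ p ∈ s,
        (∑ j ∈ (r₁ i).index, ∑ l ∈ (r₂ i).index,
          (((r₁ i).left j * aS k H ((r₁ i).right j)) * aS k H p.1) ⊗ₜ[k]
            (p.2 * ((r₂ i).left l * aS k H ((r₂ i).right l))))
        = (Coalgebra.counit (R := k) (r.left i) * Coalgebra.counit (R := k) (r.right i)) •
            (aS k H p.1 ⊗ₜ[k] p.2) := by
      intro i _ p _
      rw [show (∑ j ∈ (r₁ i).index, ∑ l ∈ (r₂ i).index,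
          (((r₁ i).left j * aS k H ((r₁ i).right j)) * aS k H p.1) ⊗ₜ[k]
            (p.2 * ((r₂ i).left l * aS k H ((r₂ i).right l))))
          = (∑ j ∈ (r₁ i).index, ((r₁ i).left j * aS k H ((r₁ i).right j)) * aS k H p.1) ⊗ₜ[k]
            (∑ l ∈ (r₂ i).index, p.2 * ((r₂ i).left l * aS k H ((r₂ i).right l))) from by
        rw [sum_tmul]
        exact Finset.sum_congr rfl fun j _ => by rw [tmul_sum]]
      rw [show (∑ j ∈ (r₁ i).index, (r₁ i).left j * aS k H ((r₁ i).right j) * aS k H p.1)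
          = algebraMap k H (Coalgebra.counit (R := k) (r.left i)) * aS k H p.1 from by
        rw [← Finset.sum_mul, sum_mul_aS_eq k H (r₁ i)]]
      rw [show (∑ l ∈ (r₂ i).index, p.2 * ((r₂ i).left l * aS k H ((r₂ i).right l)))
          = p.2 * algebraMap k H (Coalgebra.counit (R := k) (r.right i)) from by
        rw [← Finset.mul_sum, sum_mul_aS_eq k H (r₂ i)]]
      rw [← Algebra.smul_def, ← Algebra.commutes, ← Algebra.smul_def]
      simp [smul_tmul', smul_smul, mul_comm]
    calc (∑ i ∈ r.index, ∑ p ∈ s, ∑ j ∈ (r₁ i).index, ∑ l ∈ (r₂ i).index,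
          (((r₁ i).left j * aS k H ((r₁ i).right j)) * aS k H p.1) ⊗ₜ[k]
            (p.2 * ((r₂ i).left l * aS k H ((r₂ i).right l))))
        = ∑ i ∈ r.index, ∑ p ∈ s,
            (Coalgebra.counit (R := k) (r.left i) * Coalgebra.counit (R := k) (r.right i)) •
              (aS k H p.1 ⊗ₜ[k] p.2) :=
          Finset.sum_congr rfl fun i hi => Finset.sum_congr rfl fun p hp => hcol i hi p hp
      _ = Coalgebra.counit (R := k) x •
            TensorProduct.map (aS k H) (LinearMap.id : H →ₗ[k] H) M := by
          rw [show (Coalgebra.counit (R := k) x)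
              = ∑ i ∈ r.index,
                  Coalgebra.counit (R := k) (r.left i) * Coalgebra.counit (R := k) (r.right i)
              from by
            conv_lhs => rw [← sum_counit_smul k H x r]
            rw [map_sum]
            exact Finset.sum_congr rfl fun i _ => by rw [map_smul, smul_eq_mul]]
          rw [Finset.sum_smul]
          refine Finset.sum_congr rfl fun i _ => ?_
          rw [hs, map_sum, Finset.smul_sum]
          exact Finset.sum_congr rfl fun p _ => by
            rw [TensorProduct.map_tmul]; rfl
  rw [L1, ← E1, swap, E2]


/-- The elements `c₊ = (S ⊗ id)(R₂₁R)` and `c₋ = (S ⊗ id)((R₂₁R)⁻¹)` are invariant under the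
diagonal adjoint action `x · (a ⊗ b) = Σ (x₍₁₎ ▷ a) ⊗ (x₍₂₎ ▷ b)` of `H` on `H ⊗ H`
(up to the counit), hence define left `H`-module morphisms `k → H ⊗ H`. -/
theorem cPlus_cMinus_invariant
    (α β : ι → H) (R' : H ⊗[k] H)
    (hinv : (∑ i, α i ⊗ₜ[k] β i) * R' = 1 ∧ R' * (∑ i, α i ⊗ₜ[k] β i) = 1)
    (hqt1 : ∀ x : H, (∑ i, α i ⊗ₜ[k] β i) * Coalgebra.comul (R := k) x * R'
        = TensorProduct.comm k H H (Coalgebra.comul (R := k) x))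
    (hqt2 : LinearMap.rTensor H (Coalgebra.comul (R := k)) (∑ i, α i ⊗ₜ[k] β i)
        = (∑ i, (α i ⊗ₜ[k] (1 : H)) ⊗ₜ[k] β i) * (∑ i, ((1 : H) ⊗ₜ[k] α i) ⊗ₜ[k] β i))
    (hqt3 : LinearMap.lTensor H (Coalgebra.comul (R := k)) (∑ i, α i ⊗ₜ[k] β i)
        = (∑ i, α i ⊗ₜ[k] ((1 : H) ⊗ₜ[k] β i)) * (∑ i, α i ⊗ₜ[k] (β i ⊗ₜ[k] (1 : H))))
    (Q : H ⊗[k] H)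
    (hQ : ((∑ i, β i ⊗ₜ[k] α i) * (∑ i, α i ⊗ₜ[k] β i)) * Q = 1 ∧
          Q * ((∑ i, β i ⊗ₜ[k] α i) * (∑ i, α i ⊗ₜ[k] β i)) = 1)
    (x : H) :
    TensorProduct.map (adT k H) (adT k H)
        (TensorProduct.tensorTensorTensorComm k H H H H
          (Coalgebra.comul (R := k) x ⊗ₜ[k]
            TensorProduct.map (aS k H) (LinearMap.id : H →ₗ[k] H)
              ((∑ i, β i ⊗ₜ[k] α i) * (∑ i, α i ⊗ₜ[k] β i))))
      = Coalgebra.counit (R := k) x •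
          TensorProduct.map (aS k H) (LinearMap.id : H →ₗ[k] H)
            ((∑ i, β i ⊗ₜ[k] α i) * (∑ i, α i ⊗ₜ[k] β i)) ∧
    TensorProduct.map (adT k H) (adT k H)
        (TensorProduct.tensorTensorTensorComm k H H H H
          (Coalgebra.comul (R := k) x ⊗ₜ[k]
            TensorProduct.map (aS k H) (LinearMap.id : H →ₗ[k] H) Q))
      = Coalgebra.counit (R := k) x •
          TensorProduct.map (aS k H) (LinearMap.id : H →ₗ[k] H) Q :=
  by
  set Rhat : H ⊗[k] H := ∑ i, α i ⊗ₜ[k] β i with hRhat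
  set R21 : H ⊗[k] H := ∑ i, β i ⊗ₜ[k] α i with hR21
  have hR21c : TensorProduct.comm k H H Rhat = R21 := by
    rw [hRhat, hR21, map_sum]; simp
  have hR : ∀ y : H, Rhat * Coalgebra.comul (R := k) y
      = TensorProduct.comm k H H (Coalgebra.comul (R := k) y) * Rhat := by
    intro y
    conv_lhs => rw [← mul_one (Rhat * Coalgebra.comul (R := k) y), ← hinv.2, ← mul_assoc,
      hqt1 y]
  have hMplus : ∀ y : H, (R21 * Rhat) * Coalgebra.comul (R := k) y
      = Coalgebra.comul (R := k) y * (R21 * Rhat) := by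
    intro y
    have h1 : R21 * TensorProduct.comm k H H (Coalgebra.comul (R := k) y)
        = Coalgebra.comul (R := k) y * R21 := by
      rw [← hR21c, ← commH_mul, hR y, commH_mul, commH_comm, hR21c]
    conv_lhs => rw [mul_assoc, hR y, ← mul_assoc, h1, mul_assoc]
  have hMQ : ∀ y : H, Q * Coalgebra.comul (R := k) y = Coalgebra.comul (R := k) y * Q := by
    intro y
    conv_lhs => rw [← mul_one (Q * Coalgebra.comul (R := k) y), ← hQ.1, ← mul_assoc,
      mul_assoc Q, ← hMplus y, ← mul_assoc, hQ.2, one_mul]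
  exact ⟨key_invariance k H (R21 * Rhat) hMplus x, key_invariance k H Q hMQ x⟩
end
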